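/- Let X be a finite uniform d-dimensional simplicial complex with d ≥ 2, and let p satisfy (d−1)/(3d−1) < p < 1. Then for every oriented (d−1)-cell σ of X the limit Ẽ_∞^σ = lim_{n→∞} Ẽ_n^σ of the normalized expectation process of the p-lazy (d−1)-walk started at σ exists and equals the orthogonal projection of 1_σ onto Z^{d−1}; moreover, Ẽ_∞^σ is exact for every oriented (d−1)-cell σ if and only if H_{d−1}(X;ℝ) = 0. -/

import Mathlib

open scoped BigOperators Classical
open Filter Topology

noncomputable section

/-- A simplicial complex on a vertex set `V`: a family of finite subsets of `V`
(the cells) closed under taking nonempty subsets. -/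
structure SComplex (V : Type*) where
  cells : Set (Finset V)
  down_closed : ∀ ⦃s t : Finset V⦄, s ∈ cells → t ⊆ s → t.Nonempty → t ∈ cells

namespace SComplex

variable {V : Type*} (X : SComplex V)

/-- The tuple `σ` of `n` vertices spans an `(n-1)`-dimensional cell of `X`. -/
def IsCellT {n : ℕ} (σ : Fin n → V) : Prop :=
  Function.Injective σ ∧ Finset.image σ Finset.univ ∈ X.cells

/-- The degree of a cell `s`: the number of cells with one more vertex containing it. -/
def degS (s : Finset V) : ℕ :=
  Set.ncard {t : Finset V | t ∈ X.cells ∧ t.card = s.card + 1 ∧ s ⊆ t}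

/-- Degree of the cell spanned by a tuple. -/
def degT {n : ℕ} (σ : Fin n → V) : ℕ :=
  X.degS (Finset.image σ Finset.univ)

/-- An `(n-1)`-form: an alternating function on oriented `(n-1)`-cells, encoded as a
function on `n`-tuples of vertices which vanishes off the cells of `X` and is
antisymmetric under permutations. -/
def IsForm (n : ℕ) (f : (Fin n → V) → ℝ) : Prop :=
  (∀ σ, ¬ X.IsCellT σ → f σ = 0) ∧
  ∀ (σ : Fin n → V) (π : Equiv.Perm (Fin n)),
    f (σ ∘ π) = ((Equiv.Perm.sign π : ℤ) : ℝ) * f σ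

/-- The Dirac form `𝟙_{σ₀}`: 1 at `σ₀`, -1 at the reversed orientation, 0 elsewhere. -/
def dirac {n : ℕ} (σ₀ : Fin n → V) : (Fin n → V) → ℝ := fun σ =>
  if ∃ π : Equiv.Perm (Fin n), Equiv.Perm.sign π = 1 ∧ σ = σ₀ ∘ π then 1
  else if ∃ π : Equiv.Perm (Fin n), Equiv.Perm.sign π = -1 ∧ σ = σ₀ ∘ π then -1
  else 0

/-- The boundary operator: `(∂f)(σ) = Σ_{v : vσ ∈ X} f(vσ)`. -/
def bdry {n : ℕ} (f : (Fin (n + 1) → V) → ℝ) : (Fin n → V) → ℝ := fun σ =>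
  ∑ᶠ v ∈ {v : V | X.IsCellT (Fin.cons v σ)}, f (Fin.cons v σ)

/-- The weighted sum of `f` over the neighbours of `σ`:
`Σ_{σ' ∼ σ} f(σ')/deg σ' = Σ_{v ◁ σ} Σ_i (-1)^i f(v(σ∖σ_i))/deg(v(σ∖σ_i))`. -/
def nbrW {n : ℕ} (f : (Fin (n + 1) → V) → ℝ) : (Fin (n + 1) → V) → ℝ := fun σ =>
  ∑ᶠ v ∈ {v : V | X.IsCellT (Fin.cons v σ)},
    ∑ i : Fin (n + 1),
      (-1 : ℝ) ^ (i : ℕ) * f (Fin.cons v (σ ∘ i.succAbove)) /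
        (X.degT (Fin.cons v (σ ∘ i.succAbove)) : ℝ)

/-- The unweighted sum of `f` over the neighbours of `σ`: `Σ_{σ' ∼ σ} f(σ')`. -/
def nbrU {n : ℕ} (f : (Fin (n + 1) → V) → ℝ) : (Fin (n + 1) → V) → ℝ := fun σ =>
  ∑ᶠ v ∈ {v : V | X.IsCellT (Fin.cons v σ)},
    ∑ i : Fin (n + 1), (-1 : ℝ) ^ (i : ℕ) * f (Fin.cons v (σ ∘ i.succAbove))

/-- The upper Laplacian `(Δ⁺f)(σ) = f(σ) - Σ_{σ'∼σ} f(σ')/deg σ'`. -/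
def lapUp {n : ℕ} (f : (Fin (n + 1) → V) → ℝ) : (Fin (n + 1) → V) → ℝ := fun σ =>
  f σ - X.nbrW f σ

/-- The transition operator of the `p`-lazy walk:
`(Af)(σ) = p f(σ) + ((1-p)/d) Σ_{σ'∼σ} f(σ')/deg σ'`, where `d = n+1`. -/
def transOp {n : ℕ} (p : ℝ) (f : (Fin (n + 1) → V) → ℝ) : (Fin (n + 1) → V) → ℝ := fun σ =>
  p * f σ + ((1 - p) / ((n : ℝ) + 1)) * X.nbrW f σ

/-- The normalized expectation process `Ẽ_nn = (d/(p(d-1)+1))^nn • A^nn 𝟙_{σ₀}`. -/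
def nexp {n : ℕ} (p : ℝ) (σ₀ : Fin (n + 1) → V) (nn : ℕ) : (Fin (n + 1) → V) → ℝ :=
  (((n : ℝ) + 1) / (p * (n : ℝ) + 1)) ^ nn • (X.transOp p)^[nn] (SComplex.dirac σ₀)

/-- The weighted inner product `⟨f,g⟩ = Σ_{σ ∈ X^{n-1}} f(σ)g(σ)/deg σ`
(each unoriented cell is represented by `n!` tuples). -/
def innerW [Fintype V] {n : ℕ} (f g : (Fin n → V) → ℝ) : ℝ :=
  (1 / (n.factorial : ℝ)) * ∑ σ : Fin n → V, f σ * g σ / (X.degT σ : ℝ)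

/-- The unweighted inner product `⟨f,g⟩ = Σ_{σ ∈ X^{n-1}} f(σ)g(σ)`. -/
def innerU [Fintype V] {n : ℕ} (f g : (Fin n → V) → ℝ) : ℝ :=
  (1 / (n.factorial : ℝ)) * ∑ σ : Fin n → V, f σ * g σ

/-- The norm induced by the weighted inner product. -/
def normW [Fintype V] {n : ℕ} (f : (Fin n → V) → ℝ) : ℝ :=
  Real.sqrt (X.innerW f f)

/-- `f` is a closed `(d-1)`-form (`f ∈ Z^{d-1} = ker ∂_d^*`), characterized by
orthogonality to the image of `∂_d`. -/
def IsClosedForm [Fintype V] (m : ℕ) (f : (Fin (m + 2) → V) → ℝ) : Prop :=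
  X.IsForm (m + 2) f ∧
  ∀ g : (Fin (m + 3) → V) → ℝ, X.IsForm (m + 3) g → X.innerW f (X.bdry g) = 0

/-- `f` is an exact `(d-1)`-form (`f ∈ B^{d-1} = im ∂_{d-1}^*`): `f = ∂_{d-1}^* g` for a
`(d-2)`-form `g`, characterized by the adjoint identity. -/
def IsExactForm [Fintype V] (m : ℕ) (f : (Fin (m + 2) → V) → ℝ) : Prop :=
  X.IsForm (m + 2) f ∧
  ∃ g : (Fin (m + 1) → V) → ℝ, X.IsForm (m + 1) g ∧
    ∀ h : (Fin (m + 2) → V) → ℝ, X.IsForm (m + 2) h →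
      X.innerW f h = innerU g (X.bdry h)

/-- Two tuples span the same oriented cell. -/
def SameOr {n : ℕ} (σ σ' : Fin n → V) : Prop :=
  ∃ π : Equiv.Perm (Fin n), Equiv.Perm.sign π = 1 ∧ σ' = σ ∘ π

/-- The neighbour relation on oriented `(d-1)`-cells: `σ ∼ σ'` iff there is an oriented
`d`-cell of which both `σ` and the reversal of `σ'` are faces with the induced
orientation; equivalently `σ' = (-1)^i v(σ∖σ_i)` for some `v ◁ σ`. -/
def Nbr {n : ℕ} (σ σ' : Fin (n + 1) → V) : Prop :=
  ∃ (v : V) (i : Fin (n + 1)), X.IsCellT (Fin.cons v σ) ∧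
    (if Even (i : ℕ) then SameOr σ' (Fin.cons v (σ ∘ i.succAbove))
     else SameOr σ' (Fin.cons v (σ ∘ i.succAbove) ∘ Equiv.swap 0 1))

/-- `σ` is a face of the oriented cell `τ` with the orientation induced by `τ`. -/
def IsInducedFace {n : ℕ} (σ : Fin (n + 1) → V) (τ : Fin (n + 2) → V) : Prop :=
  ∃ i : Fin (n + 2), if Even (i : ℕ) then SameOr σ (τ ∘ i.succAbove)
    else SameOr σ (τ ∘ i.succAbove ∘ Equiv.swap 0 1)

/-- The family `𝒯` of `d`-cells (`d = m+2`) admits a disorientation: a choice of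
orientation for each cell of `𝒯` such that any two of them sharing a
codimension-one face induce the same orientation on it. -/
def HasDisorientation (m : ℕ) (𝒯 : Set (Finset V)) : Prop :=
  ∃ c : Finset V → (Fin (m + 3) → V),
    (∀ t ∈ 𝒯, Function.Injective (c t) ∧ Finset.image (c t) Finset.univ = t) ∧
    ∀ t ∈ 𝒯, ∀ t' ∈ 𝒯, t ≠ t' → (t ∩ t').card = m + 2 →
      ∃ σ : Fin (m + 2) → V, Function.Injective σ ∧
        Finset.image σ Finset.univ = t ∩ t' ∧
        IsInducedFace σ (c t) ∧ IsInducedFace σ (c t')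

/-- `X` (of dimension `d`) has no simple `d`-loops: no non-backtracking closed chain
of `d`-cells in which consecutive cells share a `(d-1)`-cell. -/
def NoSimpleLoops (d : ℕ) : Prop :=
  ∀ (n : ℕ) (τ : ℕ → Finset V), 2 ≤ n → (∀ i, τ (i + n) = τ i) →
    (∀ i, τ i ∈ X.cells ∧ (τ i).card = d + 1) →
    (∀ i, (τ i ∩ τ (i + 1)) ∈ X.cells ∧ (τ i ∩ τ (i + 1)).card = d) →
    (∀ i, τ i ≠ τ (i + 2)) → False

end SComplex

open SComplex

namespace StmtAux

open Equiv Fin Finset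

variable {V : Type*}

/-- Real-valued sign of a permutation. -/
def sg {n : ℕ} (π : Equiv.Perm (Fin n)) : ℝ := ((Equiv.Perm.sign π : ℤ) : ℝ)

lemma sg_mul {n : ℕ} (a b : Equiv.Perm (Fin n)) : sg (a * b) = sg a * sg b := by
  simp [sg, Units.val_mul]

lemma sg_sq {n : ℕ} (a : Equiv.Perm (Fin n)) : sg a * sg a = 1 := by
  rcases Int.units_eq_one_or (Equiv.Perm.sign a) with h | h <;> simp [sg, h]

lemma sg_inv {n : ℕ} (a : Equiv.Perm (Fin n)) : sg a⁻¹ = sg a := by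
  simp [sg]

lemma sg_one {n : ℕ} : sg (1 : Equiv.Perm (Fin n)) = 1 := by simp [sg]

/-- Extension of a permutation of `Fin n` to `Fin (n+1)` fixing `0`. -/
def extP {n : ℕ} (π : Equiv.Perm (Fin n)) : Equiv.Perm (Fin (n + 1)) :=
  Equiv.Perm.decomposeFin.symm (0, π)

@[simp] lemma extP_zero {n : ℕ} (π : Equiv.Perm (Fin n)) : extP π 0 = 0 := by
  simp [extP]

@[simp] lemma extP_succ {n : ℕ} (π : Equiv.Perm (Fin n)) (k : Fin n) :
    extP π k.succ = (π k).succ := by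
  simp [extP]

@[simp] lemma sg_extP {n : ℕ} (π : Equiv.Perm (Fin n)) : sg (extP π) = sg π := by
  simp [sg, extP]

lemma extP_injective {n : ℕ} : Function.Injective (extP (n := n)) := by
  intro a b h
  have : ((0 : Fin (n+1)), a) = ((0 : Fin (n+1)), b) :=
    Equiv.Perm.decomposeFin.symm.injective h
  simpa using this

lemma cons_comp_extP {n : ℕ} (v : V) (σ : Fin n → V) (π : Equiv.Perm (Fin n)) :
    (Fin.cons v σ) ∘ (extP π) = Fin.cons v (σ ∘ π) := by
  funext k
  refine Fin.cases ?_ (fun j => ?_) k <;> simp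

lemma image_comp_perm {n : ℕ} (σ : Fin n → V) (π : Equiv.Perm (Fin n)) :
    Finset.image (σ ∘ π) Finset.univ = Finset.image σ Finset.univ := by
  ext x
  simp only [Finset.mem_image, Finset.mem_univ, true_and, Function.comp_apply]
  constructor
  · rintro ⟨i, rfl⟩; exact ⟨π i, rfl⟩
  · rintro ⟨i, rfl⟩; exact ⟨π.symm i, by simp⟩

lemma isCellT_comp_perm (X : SComplex V) {n : ℕ} (σ : Fin n → V) (π : Equiv.Perm (Fin n)) :
    X.IsCellT (σ ∘ π) ↔ X.IsCellT σ := by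
  unfold SComplex.IsCellT
  rw [image_comp_perm]
  constructor
  · rintro ⟨h1, h2⟩
    refine ⟨?_, h2⟩
    have hs : σ = (σ ∘ π) ∘ π.symm := by funext k; simp
    rw [hs]
    exact h1.comp π.symm.injective
  · rintro ⟨h1, h2⟩
    exact ⟨h1.comp π.injective, h2⟩

lemma degT_comp_perm (X : SComplex V) {n : ℕ} (σ : Fin n → V) (π : Equiv.Perm (Fin n)) :
    X.degT (σ ∘ π) = X.degT σ := by
  unfold SComplex.degT
  rw [image_comp_perm]

lemma image_cons {n : ℕ} (v : V) (σ : Fin n → V) :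
    Finset.image (Fin.cons v σ) Finset.univ = insert v (Finset.image σ Finset.univ) := by
  ext x
  simp only [Finset.mem_image, Finset.mem_univ, true_and, Finset.mem_insert]
  constructor
  · rintro ⟨k, rfl⟩
    refine Fin.cases ?_ (fun j => ?_) k
    · left; simp
    · right; exact ⟨j, by simp⟩
  · rintro (rfl | ⟨j, rfl⟩)
    · exact ⟨0, by simp⟩
    · exact ⟨j.succ, by simp⟩

lemma isCellT_of_isCellT_cons {X : SComplex V} {n : ℕ} {v : V} {σ : Fin (n + 1) → V}
    (h : X.IsCellT (Fin.cons v σ)) : X.IsCellT σ := by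
  constructor
  · have hs : σ = (Fin.cons v σ) ∘ Fin.succ := by funext k; simp
    rw [hs]
    exact h.1.comp (Fin.succ_injective _)
  · refine X.down_closed h.2 ?_ ?_
    · intro x hx
      rw [Finset.mem_image] at hx ⊢
      obtain ⟨j, -, rfl⟩ := hx
      exact ⟨j.succ, Finset.mem_univ _, by simp⟩
    · exact ⟨σ 0, Finset.mem_image.2 ⟨0, Finset.mem_univ _, rfl⟩⟩


end StmtAux
namespace StmtAux

open Equiv Fin Finset

variable {V : Type*}

lemma isCellT_cons_iff (X : SComplex V) {n : ℕ} {v : V} {σ : Fin n → V}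
    (hσ : Function.Injective σ) :
    X.IsCellT (Fin.cons v σ) ↔
      v ∉ Finset.image σ Finset.univ ∧ insert v (Finset.image σ Finset.univ) ∈ X.cells := by
  unfold SComplex.IsCellT
  rw [Fin.cons_injective_iff, image_cons]
  have hmem : v ∈ Set.range σ ↔ v ∈ Finset.image σ Finset.univ := by
    simp [Set.mem_range]
  constructor
  · rintro ⟨⟨h1, -⟩, h2⟩; exact ⟨fun hc => h1 (hmem.2 hc), h2⟩
  · rintro ⟨h1, h2⟩; exact ⟨⟨fun hc => h1 (hmem.1 hc), hσ⟩, h2⟩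

lemma card_filter_cons [Fintype V] (X : SComplex V) {n : ℕ} {σ : Fin n → V}
    (hσ : X.IsCellT σ) :
    (Finset.univ.filter (fun v => X.IsCellT (Fin.cons v σ))).card = X.degT σ := by
  classical
  set s := Finset.image σ Finset.univ with hs
  have hcard : ∀ v ∉ s, (insert v s).card = s.card + 1 := fun v hv =>
    Finset.card_insert_of_notMem hv
  have key : {t : Finset V | t ∈ X.cells ∧ t.card = s.card + 1 ∧ s ⊆ t} =
      ↑((Finset.univ.filter (fun v => X.IsCellT (Fin.cons v σ))).image
        (fun v => insert v s)) := by
    ext t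
    simp only [Set.mem_setOf_eq, Finset.coe_image, Set.mem_image, Finset.mem_coe,
      Finset.mem_filter, Finset.mem_univ, true_and]
    constructor
    · rintro ⟨h1, h2, h3⟩
      have hne : (t \ s).Nonempty := by
        rw [← Finset.card_pos, Finset.card_sdiff_of_subset h3, h2]; omega
      obtain ⟨v, hv⟩ := hne
      have hvt : v ∈ t := (Finset.mem_sdiff.1 hv).1
      have hvs : v ∉ s := (Finset.mem_sdiff.1 hv).2
      have hts : t = insert v s := by
        refine (Finset.eq_of_subset_of_card_le (Finset.insert_subset hvt h3) ?_).symm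
        rw [h2, Finset.card_insert_of_notMem hvs]
      refine ⟨v, ?_, hts.symm⟩
      rw [isCellT_cons_iff X hσ.1, ← hs]
      exact ⟨hvs, hts ▸ h1⟩
    · rintro ⟨v, hv, rfl⟩
      rw [isCellT_cons_iff X hσ.1, ← hs] at hv
      refine ⟨hv.2, hcard v hv.1, Finset.subset_insert _ _⟩
  unfold SComplex.degT SComplex.degS
  rw [← hs, key, Set.ncard_coe_finset]
  refine (Finset.card_image_of_injOn ?_).symm
  intro a ha b hb hab
  simp only [Finset.coe_filter, Set.mem_setOf_eq] at ha hb
  have ha' := ((isCellT_cons_iff X hσ.1).1 ha.2).1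
  have hb' := ((isCellT_cons_iff X hσ.1).1 hb.2).1
  have hab' : insert a s = insert b s := hab
  have : a ∈ insert b s := hab' ▸ Finset.mem_insert_self a s
  rcases Finset.mem_insert.1 this with rfl | h
  · rfl
  · exact absurd h ha'

lemma degT_pos [Fintype V] (X : SComplex V) {n : ℕ} {σ : Fin n → V}
    (huni : ∃ t ∈ X.cells, t.card = (Finset.image σ Finset.univ).card + 1 ∧
      Finset.image σ Finset.univ ⊆ t) :
    0 < X.degT σ := by
  classical
  obtain ⟨t, h1, h2, h3⟩ := huni
  unfold SComplex.degT SComplex.degS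
  rw [Set.ncard_pos (Set.toFinite _)]
  exact ⟨t, h1, h2, h3⟩

lemma card_image_tuple [Fintype V] {n : ℕ} {σ : Fin n → V} (hσ : Function.Injective σ) :
    (Finset.image σ Finset.univ).card = n := by
  rw [Finset.card_image_of_injective _ hσ, Finset.card_univ, Fintype.card_fin]

lemma finsum_mem_setOf [Fintype V] (P : V → Prop) (h : V → ℝ) :
    (∑ᶠ v ∈ {v : V | P v}, h v) = ∑ v ∈ Finset.univ.filter P, h v := by
  classical
  rw [← finsum_mem_coe_finset]
  congr 1
  ext v
  simp

lemma bdry_eq_sum [Fintype V] (X : SComplex V) {n : ℕ} (f : (Fin (n + 1) → V) → ℝ)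
    (σ : Fin n → V) :
    X.bdry f σ =
      ∑ v ∈ Finset.univ.filter (fun v => X.IsCellT (Fin.cons v σ)), f (Fin.cons v σ) :=
  finsum_mem_setOf _ _

lemma nbrW_eq_sum [Fintype V] (X : SComplex V) {n : ℕ} (f : (Fin (n + 1) → V) → ℝ)
    (σ : Fin (n + 1) → V) :
    X.nbrW f σ =
      ∑ v ∈ Finset.univ.filter (fun v => X.IsCellT (Fin.cons v σ)),
        ∑ i : Fin (n + 1),
          (-1 : ℝ) ^ (i : ℕ) * f (Fin.cons v (σ ∘ i.succAbove)) /
            (X.degT (Fin.cons v (σ ∘ i.succAbove)) : ℝ) :=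
  finsum_mem_setOf _ _

lemma isForm_zero (X : SComplex V) (n : ℕ) : X.IsForm n (fun _ => 0) :=
  ⟨fun _ _ => rfl, fun _ _ => by simp⟩

lemma IsForm.addf {X : SComplex V} {n : ℕ} {f g : (Fin n → V) → ℝ}
    (hf : X.IsForm n f) (hg : X.IsForm n g) : X.IsForm n (fun σ => f σ + g σ) := by
  refine ⟨fun σ hσ => ?_, fun σ π => ?_⟩
  · show f σ + g σ = 0
    rw [hf.1 σ hσ, hg.1 σ hσ, add_zero]
  · show f (σ ∘ π) + g (σ ∘ π) = _ * (f σ + g σ)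
    rw [hf.2 σ π, hg.2 σ π]; ring

lemma IsForm.subf {X : SComplex V} {n : ℕ} {f g : (Fin n → V) → ℝ}
    (hf : X.IsForm n f) (hg : X.IsForm n g) : X.IsForm n (fun σ => f σ - g σ) := by
  refine ⟨fun σ hσ => ?_, fun σ π => ?_⟩
  · show f σ - g σ = 0
    rw [hf.1 σ hσ, hg.1 σ hσ, sub_zero]
  · show f (σ ∘ π) - g (σ ∘ π) = _ * (f σ - g σ)
    rw [hf.2 σ π, hg.2 σ π]; ring

lemma IsForm.smulf {X : SComplex V} {n : ℕ} {f : (Fin n → V) → ℝ} (c : ℝ)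
    (hf : X.IsForm n f) : X.IsForm n (fun σ => c * f σ) := by
  refine ⟨fun σ hσ => ?_, fun σ π => ?_⟩
  · show c * f σ = 0
    rw [hf.1 σ hσ, mul_zero]
  · show c * f (σ ∘ π) = _ * (c * f σ)
    rw [hf.2 σ π]; ring

end StmtAux
namespace StmtAux

open Equiv Fin Finset

variable {V : Type*}

/-- The bijection `Fin (n+1) × Perm (Fin n) → Perm (Fin (n+1))` sending `(i, e)` to the
permutation `0 ↦ i`, `succ k ↦ succAbove i (e k)`. -/
def permE {n : ℕ} (x : Fin (n + 1) × Equiv.Perm (Fin n)) : Equiv.Perm (Fin (n + 1)) :=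
  (Fin.cycleRange x.1)⁻¹ * extP x.2

@[simp] lemma permE_zero {n : ℕ} (i : Fin (n + 1)) (e : Equiv.Perm (Fin n)) :
    permE (i, e) 0 = i := by
  have : (Fin.cycleRange i)⁻¹ 0 = i := Fin.cycleRange_symm_zero i
  simp [permE, Equiv.Perm.mul_apply, this]

@[simp] lemma permE_succ {n : ℕ} (i : Fin (n + 1)) (e : Equiv.Perm (Fin n)) (k : Fin n) :
    permE (i, e) k.succ = i.succAbove (e k) := by
  have : (Fin.cycleRange i)⁻¹ (e k).succ = i.succAbove (e k) := Fin.cycleRange_symm_succ i (e k)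
  simp [permE, Equiv.Perm.mul_apply, this]

lemma sg_permE {n : ℕ} (i : Fin (n + 1)) (e : Equiv.Perm (Fin n)) :
    sg (permE (i, e)) = (-1 : ℝ) ^ (i : ℕ) * sg e := by
  unfold permE
  rw [sg_mul, sg_inv]
  congr 1
  · show (((Equiv.Perm.sign (Fin.cycleRange i) : ℤˣ) : ℤ) : ℝ) = _
    rw [Fin.sign_cycleRange]
    push_cast
    rfl
  · exact sg_extP e

lemma permE_bijective {n : ℕ} : Function.Bijective (permE (n := n)) := by
  constructor
  · rintro ⟨i, e⟩ ⟨i', e'⟩ h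
    have h0 : i = i' := by
      have := congrArg (fun ρ : Equiv.Perm (Fin (n+1)) => ρ 0) h
      simpa using this
    subst h0
    have h1 : extP e = extP e' := by
      have := mul_left_cancel (a := (Fin.cycleRange i)⁻¹) h
      exact this
    rw [extP_injective h1]
  · intro ρ
    set π := Fin.cycleRange (ρ 0) * ρ with hπ
    have hπ0 : π 0 = 0 := by
      simp [hπ, Equiv.Perm.mul_apply]
    have hsymm : Equiv.Perm.decomposeFin.symm (Equiv.Perm.decomposeFin π) = π :=
      Equiv.Perm.decomposeFin.symm_apply_apply π
    have hfst : (Equiv.Perm.decomposeFin π).1 = 0 := by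
      conv_rhs => rw [← hπ0]
      conv_rhs => rw [← hsymm]
      rw [← Equiv.Perm.decomposeFin_symm_apply_zero (Equiv.Perm.decomposeFin π).1
        (Equiv.Perm.decomposeFin π).2]
    refine ⟨(ρ 0, (Equiv.Perm.decomposeFin π).2), ?_⟩
    have hext : extP (Equiv.Perm.decomposeFin π).2 = π := by
      unfold extP
      rw [← hfst, Prod.mk.eta, hsymm]
    show (Fin.cycleRange (ρ 0))⁻¹ * extP (Equiv.Perm.decomposeFin π).2 = ρ
    rw [hext, hπ, inv_mul_cancel_left]

end StmtAux
namespace StmtAux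

open Equiv Fin Finset

variable {V : Type*}

lemma symmetrization [Fintype V] {n : ℕ} (g : (Fin n → V) → ℝ)
    (hg : ∀ (σ : Fin n → V) (π : Equiv.Perm (Fin n)), g (σ ∘ π) = sg π * g σ)
    (τ : Fin (n + 1) → V) :
    ∑ ρ : Equiv.Perm (Fin (n + 1)), sg ρ * g (τ ∘ ρ ∘ Fin.succ) =
      (n.factorial : ℝ) * ∑ i : Fin (n + 1), (-1 : ℝ) ^ (i : ℕ) * g (τ ∘ i.succAbove) := by
  classical
  rw [← Function.Bijective.sum_comp permE_bijective
    (fun ρ => sg ρ * g (τ ∘ ρ ∘ Fin.succ))]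
  rw [Fintype.sum_prod_type]
  have key : ∀ (i : Fin (n + 1)) (e : Equiv.Perm (Fin n)),
      sg (permE (i, e)) * g (τ ∘ (permE (i, e)) ∘ Fin.succ) =
        (-1 : ℝ) ^ (i : ℕ) * g (τ ∘ i.succAbove) := by
    intro i e
    have hcomp : τ ∘ (permE (i, e)) ∘ Fin.succ = (τ ∘ i.succAbove) ∘ e := by
      funext k
      simp [Function.comp]
    rw [hcomp, hg _ e, sg_permE]
    have hee := sg_sq e
    linear_combination ((-1:ℝ) ^ (i:ℕ) * g (τ ∘ i.succAbove)) * hee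
  calc ∑ i : Fin (n+1), ∑ e : Equiv.Perm (Fin n),
        sg (permE (i, e)) * g (τ ∘ (permE (i, e)) ∘ Fin.succ)
      = ∑ i : Fin (n+1), ∑ _e : Equiv.Perm (Fin n), (-1:ℝ)^(i:ℕ) * g (τ ∘ i.succAbove) := by
        refine Finset.sum_congr rfl fun i _ => Finset.sum_congr rfl fun e _ => key i e
    _ = (n.factorial : ℝ) * ∑ i : Fin (n+1), (-1:ℝ)^(i:ℕ) * g (τ ∘ i.succAbove) := by
        rw [Finset.mul_sum]
        refine Finset.sum_congr rfl fun i _ => ?_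
        rw [Finset.sum_const, Finset.card_univ, Fintype.card_perm, Fintype.card_fin,
          nsmul_eq_mul]

lemma altsum_comp_perm [Fintype V] {n : ℕ} (g : (Fin n → V) → ℝ)
    (hg : ∀ (σ : Fin n → V) (π : Equiv.Perm (Fin n)), g (σ ∘ π) = sg π * g σ)
    (τ : Fin (n + 1) → V) (π : Equiv.Perm (Fin (n + 1))) :
    ∑ i : Fin (n + 1), (-1 : ℝ) ^ (i : ℕ) * g ((τ ∘ π) ∘ i.succAbove) =
      sg π * ∑ i : Fin (n + 1), (-1 : ℝ) ^ (i : ℕ) * g (τ ∘ i.succAbove) := by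
  classical
  have h1 := symmetrization g hg (τ ∘ π)
  have h2 := symmetrization g hg τ
  have hre : ∑ ρ : Equiv.Perm (Fin (n + 1)), sg ρ * g ((τ ∘ π) ∘ ρ ∘ Fin.succ) =
      sg π * ∑ ρ : Equiv.Perm (Fin (n + 1)), sg ρ * g (τ ∘ ρ ∘ Fin.succ) := by
    rw [Finset.mul_sum]
    rw [← Equiv.sum_comp (Equiv.mulLeft π) (fun ρ => sg π * (sg ρ * g (τ ∘ ρ ∘ Fin.succ)))]
    refine Finset.sum_congr rfl fun ρ _ => ?_
    have hc : (τ ∘ π) ∘ ρ ∘ Fin.succ = τ ∘ (Equiv.mulLeft π ρ) ∘ Fin.succ := by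
      funext k
      simp [Equiv.Perm.mul_apply, Function.comp]
    rw [hc]
    have hs : sg (Equiv.mulLeft π ρ) = sg π * sg ρ := by
      show sg (π * ρ) = _
      rw [sg_mul]
    rw [hs]
    have hππ := sg_sq π
    linear_combination (- sg ρ * g (τ ∘ ⇑(Equiv.mulLeft π ρ) ∘ Fin.succ)) * hππ
  have hfac : (n.factorial : ℝ) ≠ 0 := Nat.cast_ne_zero.2 (Nat.factorial_ne_zero n)
  apply mul_left_cancel₀ hfac
  rw [← h1]
  rw [hre, h2]
  ring

/-- For a fixed position `i`, tuples of length `n+1` correspond to pairs of a tuple of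
length `n` and a vertex inserted at position `i`. -/
def insE {n : ℕ} (i : Fin (n + 1)) : ((Fin n → V) × V) ≃ (Fin (n + 1) → V) where
  toFun x := (Fin.cons x.2 x.1) ∘ (Fin.cycleRange i)
  invFun τ := (τ ∘ i.succAbove, τ i)
  left_inv := by
    rintro ⟨σ, v⟩
    refine Prod.ext ?_ ?_
    · funext j
      simp [Function.comp, Fin.cycleRange_succAbove]
    · simp [Function.comp, Fin.cycleRange_self]
  right_inv := by
    intro τ
    funext k
    by_cases hk : k = i
    · subst hk
      simp [Function.comp, Fin.cycleRange_self]
    · obtain ⟨j, rfl⟩ := Fin.exists_succAbove_eq hk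
      simp [Function.comp, Fin.cycleRange_succAbove]

lemma reindex_sum [Fintype V] {n : ℕ} (i : Fin (n + 1)) (G : (Fin (n + 1) → V) → ℝ) :
    ∑ τ : Fin (n + 1) → V, G τ =
      ∑ σ : Fin n → V, ∑ v : V, G ((Fin.cons v σ) ∘ (Fin.cycleRange i)) := by
  rw [← Equiv.sum_comp (insE i) G, Fintype.sum_prod_type]
  rfl

lemma insE_comp_succAbove {n : ℕ} (i : Fin (n + 1)) (v : V) (σ : Fin n → V) :
    ((Fin.cons v σ) ∘ (Fin.cycleRange i)) ∘ i.succAbove = σ := by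
  funext j
  simp [Function.comp, Fin.cycleRange_succAbove]

lemma insE_at {n : ℕ} (i : Fin (n + 1)) (v : V) (σ : Fin n → V) :
    ((Fin.cons v σ) ∘ (Fin.cycleRange i)) i = v := by
  simp [Function.comp, Fin.cycleRange_self]

lemma isCellT_insE (X : SComplex V) {n : ℕ} (i : Fin (n + 1)) (v : V) (σ : Fin n → V) :
    X.IsCellT ((Fin.cons v σ) ∘ (Fin.cycleRange i)) ↔ X.IsCellT (Fin.cons v σ) :=
  isCellT_comp_perm X _ _

end StmtAux
namespace StmtAux

open Equiv Fin Finset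

variable {V : Type*}

lemma sg_cycleRange {n : ℕ} (i : Fin (n + 1)) : sg (Fin.cycleRange i) = (-1 : ℝ) ^ (i : ℕ) := by
  unfold sg
  rw [Fin.sign_cycleRange]
  push_cast
  rfl

lemma sg_swap01 {n : ℕ} : sg (Equiv.swap (0 : Fin (n + 2)) 1) = -1 := by
  unfold sg
  rw [Equiv.Perm.sign_swap (by exact fun h => absurd (congrArg Fin.val h) (by simp))]
  simp

lemma cons_comp_succAbove_zero {n : ℕ} (v : V) (σ : Fin (n + 1) → V) :
    (Fin.cons v σ) ∘ (Fin.succAbove (0 : Fin (n + 2))) = σ := by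
  funext k
  simp [Function.comp, Fin.succAbove_zero]

lemma cons_comp_succAbove_succ {n : ℕ} (v : V) (σ : Fin (n + 1) → V) (j : Fin (n + 1)) :
    (Fin.cons v σ) ∘ (Fin.succAbove (Fin.succ j)) = Fin.cons v (σ ∘ j.succAbove) := by
  funext k
  refine Fin.cases ?_ (fun l => ?_) k
  · simp [Function.comp, Fin.succ_succAbove_zero]
  · simp [Function.comp, Fin.succ_succAbove_succ]

lemma cons_cons_swap {n : ℕ} (v w : V) (ρ : Fin n → V) :
    Fin.cons v (Fin.cons w ρ) = (Fin.cons w (Fin.cons v ρ)) ∘ (Equiv.swap 0 1) := by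
  funext k
  refine Fin.cases ?_ (fun j => ?_) k
  · rw [Function.comp_apply, Equiv.swap_apply_left, Fin.cons_zero, ← Fin.succ_zero_eq_one,
      Fin.cons_succ, Fin.cons_zero]
  · refine Fin.cases ?_ (fun l => ?_) j
    · rw [Function.comp_apply, Fin.cons_succ, Fin.cons_zero, Fin.succ_zero_eq_one,
        Equiv.swap_apply_right, Fin.cons_zero]
    · have h0 : (l.succ.succ : Fin (n + 2)) ≠ 0 := Fin.succ_ne_zero _
      have h1 : (l.succ.succ : Fin (n + 2)) ≠ 1 := by
        rw [← Fin.succ_zero_eq_one]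
        exact fun h => absurd (Fin.succ_injective _ h) (Fin.succ_ne_zero _)
      rw [Function.comp_apply, Equiv.swap_apply_of_ne_of_ne h0 h1, Fin.cons_succ,
        Fin.cons_succ, Fin.cons_succ, Fin.cons_succ]

/-- The adjoint of `bdry` with respect to `innerW` upstairs and `innerU` downstairs:
`(∂* f)(τ) = Σ_i (-1)^i f(τ∖i)/deg(τ∖i)` on cells, `0` elsewhere. -/
def dualW [Fintype V] (X : SComplex V) {n : ℕ} (f : (Fin n → V) → ℝ) :
    (Fin (n + 1) → V) → ℝ := fun τ =>
  if X.IsCellT τ then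
    ∑ i : Fin (n + 1), (-1 : ℝ) ^ (i : ℕ) *
      (f (τ ∘ i.succAbove) / (X.degT (τ ∘ i.succAbove) : ℝ))
  else 0

/-- The adjoint of `bdry` with respect to `innerU` upstairs and `innerW` downstairs:
`(δ g)(σ) = deg σ · Σ_i (-1)^i g(σ∖i)` on cells, `0` elsewhere. -/
def dualU [Fintype V] (X : SComplex V) {n : ℕ} (g : (Fin n → V) → ℝ) :
    (Fin (n + 1) → V) → ℝ := fun τ =>
  if X.IsCellT τ then
    (X.degT τ : ℝ) * ∑ i : Fin (n + 1), (-1 : ℝ) ^ (i : ℕ) * g (τ ∘ i.succAbove)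
  else 0

lemma isForm_dualW [Fintype V] (X : SComplex V) {n : ℕ} {f : (Fin n → V) → ℝ}
    (hf : X.IsForm n f) : X.IsForm (n + 1) (dualW X f) := by
  have hg : ∀ (σ : Fin n → V) (π : Equiv.Perm (Fin n)),
      (fun σ => f σ / (X.degT σ : ℝ)) (σ ∘ π) = sg π * (fun σ => f σ / (X.degT σ : ℝ)) σ := by
    intro σ π
    show f (σ ∘ π) / (X.degT (σ ∘ π) : ℝ) = sg π * (f σ / (X.degT σ : ℝ))
    rw [hf.2 σ π, degT_comp_perm, mul_div_assoc]
    rfl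
  constructor
  · intro τ hτ
    exact if_neg hτ
  · intro τ π
    unfold dualW
    by_cases hτ : X.IsCellT τ
    · rw [if_pos hτ, if_pos ((isCellT_comp_perm X τ π).2 hτ)]
      exact altsum_comp_perm (fun σ => f σ / (X.degT σ : ℝ)) hg τ π
    · rw [if_neg hτ, if_neg (fun hc => hτ ((isCellT_comp_perm X τ π).1 hc)), mul_zero]

lemma isForm_dualU [Fintype V] (X : SComplex V) {n : ℕ} {g : (Fin n → V) → ℝ}
    (hgf : X.IsForm n g) : X.IsForm (n + 1) (dualU X g) := by
  have hg : ∀ (σ : Fin n → V) (π : Equiv.Perm (Fin n)), g (σ ∘ π) = sg π * g σ := hgf.2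
  constructor
  · intro τ hτ
    exact if_neg hτ
  · intro τ π
    unfold dualU
    by_cases hτ : X.IsCellT τ
    · rw [if_pos hτ, if_pos ((isCellT_comp_perm X τ π).2 hτ), degT_comp_perm,
        altsum_comp_perm g hg τ π]
      unfold sg
      ring
    · rw [if_neg hτ, if_neg (fun hc => hτ ((isCellT_comp_perm X τ π).1 hc)), mul_zero]

lemma isForm_bdry [Fintype V] (X : SComplex V) {n : ℕ} {g : (Fin (n + 2) → V) → ℝ}
    (hg : X.IsForm (n + 2) g) : X.IsForm (n + 1) (X.bdry g) := by
  constructor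
  · intro σ hσ
    rw [bdry_eq_sum]
    refine Finset.sum_eq_zero fun v hv => ?_
    exact absurd (isCellT_of_isCellT_cons (Finset.mem_filter.1 hv).2) hσ
  · intro σ π
    rw [bdry_eq_sum, bdry_eq_sum, Finset.mul_sum]
    have hset : Finset.univ.filter (fun v => X.IsCellT (Fin.cons v (σ ∘ π))) =
        Finset.univ.filter (fun v => X.IsCellT (Fin.cons v σ)) := by
      refine Finset.filter_congr fun v _ => ?_
      rw [← cons_comp_extP, isCellT_comp_perm]
    rw [hset]
    refine Finset.sum_congr rfl fun v _ => ?_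
    rw [← cons_comp_extP, hg.2 _ (extP π)]
    have h2 : sg (extP π) = sg π := sg_extP π
    unfold sg at h2
    rw [h2]

lemma bdry_dualW [Fintype V] (X : SComplex V) {n : ℕ}
    (hdeg : ∀ σ : Fin (n + 1) → V, X.IsCellT σ → 0 < X.degT σ)
    {f : (Fin (n + 1) → V) → ℝ} (hf : X.IsForm (n + 1) f) (σ : Fin (n + 1) → V) :
    X.bdry (dualW X f) σ = f σ - X.nbrW f σ := by
  rw [bdry_eq_sum, nbrW_eq_sum]
  by_cases hσ : X.IsCellT σ
  · have hstep : ∀ v ∈ Finset.univ.filter (fun v => X.IsCellT (Fin.cons v σ)),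
        dualW X f (Fin.cons v σ) = f σ / (X.degT σ : ℝ) -
          ∑ j : Fin (n + 1), (-1 : ℝ) ^ (j : ℕ) * f (Fin.cons v (σ ∘ j.succAbove)) /
            (X.degT (Fin.cons v (σ ∘ j.succAbove)) : ℝ) := by
      intro v hv
      have hcell : X.IsCellT (Fin.cons v σ) := (Finset.mem_filter.1 hv).2
      unfold dualW
      rw [if_pos hcell, Fin.sum_univ_succ]
      rw [cons_comp_succAbove_zero]
      have hrest : ∀ j : Fin (n + 1),
          (-1 : ℝ) ^ ((Fin.succ j : Fin (n + 2)) : ℕ) *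
            (f ((Fin.cons v σ) ∘ (Fin.succAbove (Fin.succ j))) /
              (X.degT ((Fin.cons v σ) ∘ (Fin.succAbove (Fin.succ j))) : ℝ)) =
          -((-1 : ℝ) ^ (j : ℕ) * f (Fin.cons v (σ ∘ j.succAbove)) /
            (X.degT (Fin.cons v (σ ∘ j.succAbove)) : ℝ)) := by
        intro j
        rw [cons_comp_succAbove_succ, Fin.val_succ, pow_succ]
        ring
      rw [Finset.sum_congr rfl (fun j _ => hrest j), Finset.sum_neg_distrib]
      simp only [Fin.val_zero, pow_zero, one_mul]
      ring
    rw [Finset.sum_congr rfl hstep, Finset.sum_sub_distrib, Finset.sum_const,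
      card_filter_cons X hσ, nsmul_eq_mul]
    have hd : (X.degT σ : ℝ) ≠ 0 := ne_of_gt (Nat.cast_pos.2 (hdeg σ hσ))
    rw [mul_div_cancel₀ _ hd]
  · have hempty : Finset.univ.filter (fun v => X.IsCellT (Fin.cons v σ)) = ∅ := by
      refine Finset.filter_eq_empty_iff.2 fun v _ => fun hc => hσ (isCellT_of_isCellT_cons hc)
    rw [hempty, Finset.sum_empty, Finset.sum_empty, hf.1 σ hσ, sub_zero]

end StmtAux
namespace StmtAux

open Equiv Fin Finset

variable {V : Type*}

lemma innerW_bdry [Fintype V] (X : SComplex V) {n : ℕ}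
    {f : (Fin (n + 1) → V) → ℝ}
    {g : (Fin (n + 2) → V) → ℝ} (hg : X.IsForm (n + 2) g) :
    X.innerW f (X.bdry g) = SComplex.innerU (dualW X f) g := by
  classical
  set S : ℝ := ∑ σ : Fin (n + 1) → V, ∑ v : V,
    (if X.IsCellT (Fin.cons v σ) then
      f σ / (X.degT σ : ℝ) * g (Fin.cons v σ) else 0) with hS
  have hRHS : SComplex.innerU (dualW X f) g = (1 / ((n + 2).factorial : ℝ)) * ((n + 2 : ℝ) * S) := by
    unfold SComplex.innerU
    congr 1
    have hpt : ∀ τ : Fin (n + 2) → V, dualW X f τ * g τ =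
        ∑ i : Fin (n + 2), (if X.IsCellT τ then
          (-1 : ℝ) ^ (i : ℕ) * (f (τ ∘ i.succAbove) / (X.degT (τ ∘ i.succAbove) : ℝ)) * g τ
          else 0) := by
      intro τ
      unfold dualW
      by_cases hτ : X.IsCellT τ
      · rw [if_pos hτ, Finset.sum_mul]
        exact Finset.sum_congr rfl fun i _ => by rw [if_pos hτ]
      · rw [if_neg hτ, zero_mul]
        exact (Finset.sum_eq_zero fun i _ => by rw [if_neg hτ]).symm
    rw [Finset.sum_congr rfl fun τ _ => hpt τ, Finset.sum_comm]
    have hfix : ∀ i : Fin (n + 2),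
        (∑ τ : Fin (n + 2) → V, (if X.IsCellT τ then
          (-1 : ℝ) ^ (i : ℕ) * (f (τ ∘ i.succAbove) / (X.degT (τ ∘ i.succAbove) : ℝ)) * g τ
          else 0)) = S := by
      intro i
      rw [reindex_sum i]
      refine Finset.sum_congr rfl fun σ _ => Finset.sum_congr rfl fun v _ => ?_
      rw [insE_comp_succAbove]
      by_cases hc : X.IsCellT (Fin.cons v σ)
      · rw [if_pos ((isCellT_insE X i v σ).2 hc), if_pos hc]
        have hgv : g ((Fin.cons v σ) ∘ (Fin.cycleRange i)) =
            (-1 : ℝ) ^ (i : ℕ) * g (Fin.cons v σ) := by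
          have := hg.2 (Fin.cons v σ) (Fin.cycleRange i)
          rw [this]
          congr 1
          exact sg_cycleRange i
        rw [hgv]
        have hsq : (-1 : ℝ) ^ (i : ℕ) * ((-1 : ℝ) ^ (i : ℕ)) = 1 := by
          rw [← pow_add]
          exact Even.neg_one_pow ⟨(i : ℕ), rfl⟩
        calc (-1:ℝ)^(i:ℕ) * (f σ / (X.degT σ : ℝ)) * ((-1:ℝ)^(i:ℕ) * g (Fin.cons v σ))
            = ((-1:ℝ)^(i:ℕ) * ((-1:ℝ)^(i:ℕ))) * (f σ / (X.degT σ : ℝ) * g (Fin.cons v σ)) := by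
              ring
          _ = f σ / (X.degT σ : ℝ) * g (Fin.cons v σ) := by rw [hsq, one_mul]
      · rw [if_neg (fun h => hc ((isCellT_insE X i v σ).1 h)), if_neg hc]
    rw [Finset.sum_congr rfl fun i _ => hfix i, Finset.sum_const, Finset.card_univ,
      Fintype.card_fin, nsmul_eq_mul]
    push_cast
    try ring
  have hLHS : X.innerW f (X.bdry g) = (1 / ((n + 1).factorial : ℝ)) * S := by
    unfold SComplex.innerW
    congr 1
    refine Finset.sum_congr rfl fun σ _ => ?_
    rw [bdry_eq_sum, Finset.sum_filter, Finset.mul_sum, Finset.sum_div]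
    refine Finset.sum_congr rfl fun v _ => ?_
    by_cases hc : X.IsCellT (Fin.cons v σ)
    · rw [if_pos hc, if_pos hc]
      ring
    · rw [if_neg hc, if_neg hc, mul_zero, zero_div]
  rw [hLHS, hRHS]
  have hfac : ((n + 2).factorial : ℝ) = (n + 2 : ℝ) * ((n + 1).factorial : ℝ) := by
    exact_mod_cast congrArg (Nat.cast : ℕ → ℝ) (Nat.factorial_succ (n + 1))
  rw [hfac]
  have h1 : ((n + 1).factorial : ℝ) ≠ 0 := Nat.cast_ne_zero.2 (Nat.factorial_ne_zero _)
  have h2 : (n + 2 : ℝ) ≠ 0 := by positivity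
  field_simp

lemma innerW_dualU [Fintype V] (X : SComplex V) {n : ℕ}
    (hdeg : ∀ σ : Fin (n + 1) → V, X.IsCellT σ → 0 < X.degT σ)
    {g : (Fin n → V) → ℝ}
    {h : (Fin (n + 1) → V) → ℝ} (hh : X.IsForm (n + 1) h) :
    X.innerW (dualU X g) h = SComplex.innerU g (X.bdry h) := by
  classical
  set S : ℝ := ∑ ρ : Fin n → V, ∑ v : V,
    (if X.IsCellT (Fin.cons v ρ) then g ρ * h (Fin.cons v ρ) else 0) with hS
  have hLHS : X.innerW (dualU X g) h = (1 / ((n + 1).factorial : ℝ)) * ((n + 1 : ℝ) * S) := by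
    unfold SComplex.innerW
    congr 1
    have hpt : ∀ σ : Fin (n + 1) → V, dualU X g σ * h σ / (X.degT σ : ℝ) =
        ∑ i : Fin (n + 1), (if X.IsCellT σ then
          (-1 : ℝ) ^ (i : ℕ) * g (σ ∘ i.succAbove) * h σ else 0) := by
      intro σ
      unfold dualU
      by_cases hσ : X.IsCellT σ
      · rw [if_pos hσ]
        have hd : (X.degT σ : ℝ) ≠ 0 := ne_of_gt (Nat.cast_pos.2 (hdeg σ hσ))
        have hR : ∑ i : Fin (n + 1), (if X.IsCellT σ then
            (-1:ℝ)^(i:ℕ) * g (σ ∘ i.succAbove) * h σ else 0)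
            = (∑ i : Fin (n + 1), (-1:ℝ)^(i:ℕ) * g (σ ∘ i.succAbove)) * h σ := by
          rw [Finset.sum_mul]
          exact Finset.sum_congr rfl fun i _ => by rw [if_pos hσ]
        rw [hR]
        field_simp
      · rw [if_neg hσ, zero_mul, zero_div]
        exact (Finset.sum_eq_zero fun i _ => by rw [if_neg hσ]).symm
    rw [Finset.sum_congr rfl fun σ _ => hpt σ, Finset.sum_comm]
    have hfix : ∀ i : Fin (n + 1),
        (∑ σ : Fin (n + 1) → V, (if X.IsCellT σ then
          (-1 : ℝ) ^ (i : ℕ) * g (σ ∘ i.succAbove) * h σ else 0)) = S := by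
      intro i
      rw [reindex_sum i]
      refine Finset.sum_congr rfl fun ρ _ => Finset.sum_congr rfl fun v _ => ?_
      rw [insE_comp_succAbove]
      by_cases hc : X.IsCellT (Fin.cons v ρ)
      · rw [if_pos ((isCellT_insE X i v ρ).2 hc), if_pos hc]
        have hhv : h ((Fin.cons v ρ) ∘ (Fin.cycleRange i)) =
            (-1 : ℝ) ^ (i : ℕ) * h (Fin.cons v ρ) := by
          rw [hh.2 (Fin.cons v ρ) (Fin.cycleRange i)]
          congr 1
          exact sg_cycleRange i
        rw [hhv]
        have hsq : (-1 : ℝ) ^ (i : ℕ) * ((-1 : ℝ) ^ (i : ℕ)) = 1 := by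
          rw [← pow_add]
          exact Even.neg_one_pow ⟨(i : ℕ), rfl⟩
        calc (-1:ℝ)^(i:ℕ) * g ρ * ((-1:ℝ)^(i:ℕ) * h (Fin.cons v ρ))
            = ((-1:ℝ)^(i:ℕ) * ((-1:ℝ)^(i:ℕ))) * (g ρ * h (Fin.cons v ρ)) := by ring
          _ = g ρ * h (Fin.cons v ρ) := by rw [hsq, one_mul]
      · rw [if_neg (fun hcc => hc ((isCellT_insE X i v ρ).1 hcc)), if_neg hc]
    rw [Finset.sum_congr rfl fun i _ => hfix i, Finset.sum_const, Finset.card_univ,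
      Fintype.card_fin, nsmul_eq_mul]
    push_cast
    try ring
  have hRHS : SComplex.innerU g (X.bdry h) = (1 / (n.factorial : ℝ)) * S := by
    unfold SComplex.innerU
    congr 1
    refine Finset.sum_congr rfl fun ρ _ => ?_
    rw [bdry_eq_sum, Finset.sum_filter, Finset.mul_sum]
    refine Finset.sum_congr rfl fun v _ => ?_
    rw [mul_ite, mul_zero]
  rw [hLHS, hRHS]
  have hfac : ((n + 1).factorial : ℝ) = (n + 1 : ℝ) * (n.factorial : ℝ) := by
    exact_mod_cast congrArg (Nat.cast : ℕ → ℝ) (Nat.factorial_succ n)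
  rw [hfac]
  have h1 : (n.factorial : ℝ) ≠ 0 := Nat.cast_ne_zero.2 (Nat.factorial_ne_zero _)
  have h2 : (n + 1 : ℝ) ≠ 0 := by positivity
  field_simp

lemma bdry_bdry [Fintype V] (X : SComplex V) {n : ℕ}
    {G : (Fin (n + 2) → V) → ℝ} (hG : X.IsForm (n + 2) G) (ρ : Fin n → V) :
    X.bdry (X.bdry G) ρ = 0 := by
  classical
  rw [bdry_eq_sum, Finset.sum_filter]
  have h2 : ∀ w : V, (if X.IsCellT (Fin.cons w ρ) then X.bdry G (Fin.cons w ρ) else 0) =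
      ∑ v : V, (if X.IsCellT (Fin.cons v (Fin.cons w ρ)) then
        G (Fin.cons v (Fin.cons w ρ)) else 0) := by
    intro w
    by_cases hw : X.IsCellT (Fin.cons w ρ)
    · rw [if_pos hw, bdry_eq_sum, Finset.sum_filter]
    · rw [if_neg hw]
      exact (Finset.sum_eq_zero fun v _ =>
        if_neg (fun hq => hw (isCellT_of_isCellT_cons hq))).symm
  rw [Finset.sum_congr rfl fun w _ => h2 w]
  set S : ℝ := ∑ w : V, ∑ v : V, (if X.IsCellT (Fin.cons v (Fin.cons w ρ)) then
    G (Fin.cons v (Fin.cons w ρ)) else 0) with hSdef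
  have hskew : S = -S := by
    conv_lhs => rw [hSdef, Finset.sum_comm]
    rw [hSdef, ← Finset.sum_neg_distrib]
    refine Finset.sum_congr rfl fun v _ => ?_
    rw [← Finset.sum_neg_distrib]
    refine Finset.sum_congr rfl fun w _ => ?_
    have hcs := cons_cons_swap w v ρ
    have hcell : X.IsCellT (Fin.cons w (Fin.cons v ρ)) ↔
        X.IsCellT (Fin.cons v (Fin.cons w ρ)) := by
      rw [hcs]
      exact isCellT_comp_perm X _ _
    by_cases hc : X.IsCellT (Fin.cons v (Fin.cons w ρ))
    · rw [if_pos (hcell.2 hc), if_pos hc]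
      rw [hcs, hG.2 _ (Equiv.swap 0 1)]
      have := sg_swap01 (n := n)
      unfold sg at this
      rw [this]
      ring
    · rw [if_neg (fun hh => hc (hcell.1 hh)), if_neg hc, neg_zero]
  have : S = 0 := by linarith
  exact this

end StmtAux
namespace StmtAux

open Equiv Fin Finset

variable {V : Type*}

lemma innerW_comm [Fintype V] (X : SComplex V) {n : ℕ} (f g : (Fin n → V) → ℝ) :
    X.innerW f g = X.innerW g f := by
  unfold SComplex.innerW
  congr 1
  exact Finset.sum_congr rfl fun σ _ => by ring

lemma innerW_sub_left [Fintype V] (X : SComplex V) {n : ℕ} (f g h : (Fin n → V) → ℝ) :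
    X.innerW (fun σ => f σ - g σ) h = X.innerW f h - X.innerW g h := by
  unfold SComplex.innerW
  rw [← mul_sub, ← Finset.sum_sub_distrib]
  congr 1
  exact Finset.sum_congr rfl fun σ _ => by ring

lemma innerW_add_left [Fintype V] (X : SComplex V) {n : ℕ} (f g h : (Fin n → V) → ℝ) :
    X.innerW (fun σ => f σ + g σ) h = X.innerW f h + X.innerW g h := by
  unfold SComplex.innerW
  rw [← mul_add, ← Finset.sum_add_distrib]
  congr 1
  exact Finset.sum_congr rfl fun σ _ => by ring

lemma innerW_smul_left [Fintype V] (X : SComplex V) {n : ℕ} (c : ℝ) (f h : (Fin n → V) → ℝ) :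
    X.innerW (fun σ => c * f σ) h = c * X.innerW f h := by
  unfold SComplex.innerW
  have hsum : ∑ σ : Fin n → V, (fun σ => c * f σ) σ * h σ / (X.degT σ : ℝ)
      = c * ∑ σ : Fin n → V, f σ * h σ / (X.degT σ : ℝ) := by
    rw [Finset.mul_sum]
    refine Finset.sum_congr rfl fun σ _ => ?_
    show c * f σ * h σ / _ = _
    ring
  rw [hsum]
  ring

lemma innerW_zero_right [Fintype V] (X : SComplex V) {n : ℕ} (f : (Fin n → V) → ℝ) :
    X.innerW f (fun _ => 0) = 0 := by
  unfold SComplex.innerW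
  rw [Finset.sum_eq_zero fun σ _ => by simp, mul_zero]

lemma innerW_nonneg [Fintype V] (X : SComplex V) {n : ℕ} (f : (Fin n → V) → ℝ) :
    0 ≤ X.innerW f f := by
  unfold SComplex.innerW
  apply mul_nonneg (by positivity)
  refine Finset.sum_nonneg fun σ _ => div_nonneg (mul_self_nonneg _) (Nat.cast_nonneg _)

lemma innerW_definite [Fintype V] (X : SComplex V) {n : ℕ}
    (hdeg : ∀ σ : Fin n → V, X.IsCellT σ → 0 < X.degT σ)
    {f : (Fin n → V) → ℝ} (hf : X.IsForm n f) (h : X.innerW f f = 0) :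
    f = fun _ => 0 := by
  unfold SComplex.innerW at h
  have hfac : (0 : ℝ) < 1 / (n.factorial : ℝ) := by positivity
  have hsum : ∑ σ : Fin n → V, f σ * f σ / (X.degT σ : ℝ) = 0 := by
    rcases mul_eq_zero.1 h with h' | h'
    · exact absurd h' (ne_of_gt hfac)
    · exact h'
  have hterm := (Finset.sum_eq_zero_iff_of_nonneg
    (fun σ _ => div_nonneg (mul_self_nonneg (f σ)) (Nat.cast_nonneg _))).1 hsum
  funext σ
  by_cases hσ : X.IsCellT σ
  · have h0 := hterm σ (Finset.mem_univ σ)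
    have hd : (0 : ℝ) < (X.degT σ : ℝ) := Nat.cast_pos.2 (hdeg σ hσ)
    have : f σ * f σ = 0 := by
      by_contra hne
      exact hne (by
        have := div_eq_zero_iff.1 h0
        rcases this with h1 | h1
        · exact h1
        · exact absurd h1 (ne_of_gt hd))
    exact mul_self_eq_zero.1 this
  · exact hf.1 σ hσ

lemma innerU_comm [Fintype V] {n : ℕ} (f g : (Fin n → V) → ℝ) :
    SComplex.innerU f g = SComplex.innerU g f := by
  unfold SComplex.innerU
  congr 1
  exact Finset.sum_congr rfl fun σ _ => by ring

lemma innerU_nonneg [Fintype V] {n : ℕ} (f : (Fin n → V) → ℝ) :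
    0 ≤ SComplex.innerU f f := by
  unfold SComplex.innerU
  exact mul_nonneg (by positivity) (Finset.sum_nonneg fun σ _ => mul_self_nonneg _)

lemma innerU_self_eq_zero [Fintype V] {n : ℕ} {f : (Fin n → V) → ℝ}
    (h : SComplex.innerU f f = 0) : f = fun _ => 0 := by
  unfold SComplex.innerU at h
  have hfac : (0 : ℝ) < 1 / (n.factorial : ℝ) := by positivity
  have hsum : ∑ σ : Fin n → V, f σ * f σ = 0 := by
    rcases mul_eq_zero.1 h with h' | h'
    · exact absurd h' (ne_of_gt hfac)
    · exact h'
  have hterm := (Finset.sum_eq_zero_iff_of_nonneg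
    (fun σ _ => mul_self_nonneg (f σ))).1 hsum
  funext σ
  exact mul_self_eq_zero.1 (hterm σ (Finset.mem_univ σ))

lemma innerU_zero_left [Fintype V] {n : ℕ} (g : (Fin n → V) → ℝ) :
    SComplex.innerU (fun _ => (0 : ℝ)) g = 0 := by
  unfold SComplex.innerU
  rw [Finset.sum_eq_zero fun σ _ => by simp, mul_zero]

lemma bdry_zero [Fintype V] (X : SComplex V) {n : ℕ} (σ : Fin n → V) :
    X.bdry (fun _ => (0 : ℝ)) σ = 0 := by
  rw [bdry_eq_sum]
  exact Finset.sum_eq_zero fun v _ => rfl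

lemma comp_mul {n : ℕ} (σ₀ : Fin n → V) (π ρ : Equiv.Perm (Fin n)) :
    (σ₀ ∘ π) ∘ ρ = σ₀ ∘ (π * ρ) := by
  funext k
  simp [Equiv.Perm.mul_apply, Function.comp]

lemma comp_perm_cancel {n : ℕ} {σ₀ : Fin n → V} (hinj : Function.Injective σ₀)
    {π π' : Equiv.Perm (Fin n)} (h : σ₀ ∘ π = σ₀ ∘ π') : π = π' := by
  ext k
  exact congrArg Fin.val (hinj (congrFun h k))

lemma dirac_comp {n : ℕ} {σ₀ : Fin n → V} (hinj : Function.Injective σ₀)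
    (π : Equiv.Perm (Fin n)) : SComplex.dirac σ₀ (σ₀ ∘ π) = sg π := by
  unfold SComplex.dirac
  rcases Int.units_eq_one_or (Equiv.Perm.sign π) with hs | hs
  · rw [if_pos ⟨π, hs, rfl⟩]
    unfold sg
    rw [hs]
    simp
  · have hnot1 : ¬ ∃ π' : Equiv.Perm (Fin n), Equiv.Perm.sign π' = 1 ∧ σ₀ ∘ π = σ₀ ∘ π' := by
      rintro ⟨π', h1, h2⟩
      rw [comp_perm_cancel hinj h2, h1] at hs
      exact absurd hs (by decide)
    rw [if_neg hnot1, if_pos ⟨π, hs, rfl⟩]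
    unfold sg
    rw [hs]
    simp

lemma dirac_not_orbit {n : ℕ} {σ₀ σ : Fin n → V} (h : ∀ π : Equiv.Perm (Fin n), σ ≠ σ₀ ∘ π) :
    SComplex.dirac σ₀ σ = 0 := by
  unfold SComplex.dirac
  rw [if_neg, if_neg]
  · rintro ⟨π, -, hπ⟩
    exact h π hπ
  · rintro ⟨π, -, hπ⟩
    exact h π hπ

lemma isForm_dirac (X : SComplex V) {n : ℕ} {σ₀ : Fin n → V} (hσ₀ : X.IsCellT σ₀) :
    X.IsForm n (SComplex.dirac σ₀) := by
  constructor
  · intro σ hσ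
    refine dirac_not_orbit fun π hπ => hσ ?_
    rw [hπ]
    exact (isCellT_comp_perm X σ₀ π).2 hσ₀
  · intro σ ρ
    by_cases horb : ∃ π : Equiv.Perm (Fin n), σ = σ₀ ∘ π
    · obtain ⟨π, rfl⟩ := horb
      rw [comp_mul, dirac_comp hσ₀.1, dirac_comp hσ₀.1, sg_mul]
      show sg π * sg ρ = sg ρ * sg π
      ring
    · rw [dirac_not_orbit (fun π hπ => horb ⟨π, hπ⟩), mul_zero]
      refine dirac_not_orbit fun π hπ => horb ⟨π * ρ⁻¹, ?_⟩
      have hcomp : (σ ∘ ⇑ρ) ∘ ⇑ρ⁻¹ = σ := by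
        funext k
        simp
      rw [← hcomp, hπ, comp_mul]

lemma innerW_dirac [Fintype V] (X : SComplex V) {n : ℕ}
    {f : (Fin n → V) → ℝ} (hf : X.IsForm n f) {σ₀ : Fin n → V} (hσ₀ : X.IsCellT σ₀) :
    X.innerW f (SComplex.dirac σ₀) = f σ₀ / (X.degT σ₀ : ℝ) := by
  classical
  unfold SComplex.innerW
  have hinj2 : Function.Injective (fun π : Equiv.Perm (Fin n) => σ₀ ∘ π) := by
    intro a b hab
    exact comp_perm_cancel hσ₀.1 hab
  have hzero : ∀ σ ∈ Finset.univ,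
      σ ∉ Finset.image (fun π : Equiv.Perm (Fin n) => σ₀ ∘ π) Finset.univ →
      f σ * SComplex.dirac σ₀ σ / (X.degT σ : ℝ) = 0 := by
    intro σ _ hσ
    have : ∀ π : Equiv.Perm (Fin n), σ ≠ σ₀ ∘ π := by
      intro π hπ
      exact hσ (Finset.mem_image.2 ⟨π, Finset.mem_univ _, hπ.symm⟩)
    rw [dirac_not_orbit this, mul_zero, zero_div]
  rw [← Finset.sum_subset (Finset.subset_univ _) hzero, Finset.sum_image
    (fun a _ b _ hab => hinj2 hab)]
  have hterm : ∀ π : Equiv.Perm (Fin n),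
      f (σ₀ ∘ π) * SComplex.dirac σ₀ (σ₀ ∘ π) / (X.degT (σ₀ ∘ π) : ℝ) =
        f σ₀ / (X.degT σ₀ : ℝ) := by
    intro π
    rw [dirac_comp hσ₀.1, hf.2 σ₀ π, degT_comp_perm]
    have := sg_sq π
    unfold sg at this ⊢
    calc (↑↑(Equiv.Perm.sign π) * f σ₀) * ↑↑(Equiv.Perm.sign π) / (X.degT σ₀ : ℝ)
        = ((↑↑(Equiv.Perm.sign π) : ℝ) * ↑↑(Equiv.Perm.sign π)) * f σ₀ / (X.degT σ₀ : ℝ) := by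
          ring
      _ = f σ₀ / (X.degT σ₀ : ℝ) := by rw [this, one_mul]
  rw [Finset.sum_congr rfl fun π _ => hterm π, Finset.sum_const, Finset.card_univ,
    Fintype.card_perm, Fintype.card_fin, nsmul_eq_mul]
  have hfac : (n.factorial : ℝ) ≠ 0 := Nat.cast_ne_zero.2 (Nat.factorial_ne_zero _)
  field_simp

end StmtAux
namespace StmtAux

open Equiv Fin Finset

variable {V : Type*}

lemma nbrW_form_decomp [Fintype V] (X : SComplex V) {n : ℕ}
    (hdeg : ∀ σ : Fin (n + 1) → V, X.IsCellT σ → 0 < X.degT σ)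
    {f : (Fin (n + 1) → V) → ℝ} (hf : X.IsForm (n + 1) f) :
    X.nbrW f = fun σ => f σ - X.bdry (dualW X f) σ := by
  funext σ
  rw [bdry_dualW X hdeg hf σ]
  ring

lemma isForm_nbrW [Fintype V] (X : SComplex V) {n : ℕ}
    (hdeg : ∀ σ : Fin (n + 1) → V, X.IsCellT σ → 0 < X.degT σ)
    {f : (Fin (n + 1) → V) → ℝ} (hf : X.IsForm (n + 1) f) :
    X.IsForm (n + 1) (X.nbrW f) := by
  rw [nbrW_form_decomp X hdeg hf]
  exact IsForm.subf hf (isForm_bdry X (isForm_dualW X hf))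

lemma innerW_nbrW_self [Fintype V] (X : SComplex V) {n : ℕ}
    (hdeg : ∀ σ : Fin (n + 1) → V, X.IsCellT σ → 0 < X.degT σ)
    {f : (Fin (n + 1) → V) → ℝ} (hf : X.IsForm (n + 1) f) :
    X.innerW f f - X.innerW (X.nbrW f) f =
      SComplex.innerU (dualW X f) (dualW X f) := by
  have h1 : X.innerW (fun σ => f σ - X.nbrW f σ) f =
      X.innerW f f - X.innerW (X.nbrW f) f := innerW_sub_left X f (X.nbrW f) f
  have h2 : (fun σ => f σ - X.nbrW f σ) = X.bdry (dualW X f) := by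
    funext σ
    rw [bdry_dualW X hdeg hf σ]
  rw [← h1, h2, innerW_comm, innerW_bdry X (isForm_dualW X hf)]

lemma innerU_dualW_le [Fintype V] (X : SComplex V) {n : ℕ}
    (hdeg : ∀ σ : Fin (n + 1) → V, X.IsCellT σ → 0 < X.degT σ)
    {f : (Fin (n + 1) → V) → ℝ} (hf : X.IsForm (n + 1) f) :
    SComplex.innerU (dualW X f) (dualW X f) ≤ ((n : ℝ) + 2) * X.innerW f f := by
  classical
  set T : ℝ := ∑ σ : Fin (n + 1) → V, f σ * f σ / (X.degT σ : ℝ) with hT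
  have hWf : X.innerW f f = (1 / (((n + 1).factorial : ℕ) : ℝ)) * T := rfl
  have hptw : ∀ τ : Fin (n + 2) → V, dualW X f τ * dualW X f τ ≤
      ((n : ℝ) + 2) * ∑ i : Fin (n + 2), (if X.IsCellT τ then
        (f (τ ∘ i.succAbove) / (X.degT (τ ∘ i.succAbove) : ℝ)) ^ 2 else 0) := by
    intro τ
    unfold dualW
    by_cases hτ : X.IsCellT τ
    · rw [if_pos hτ, ← sq]
      have hcs := sq_sum_le_card_mul_sum_sq (s := (Finset.univ : Finset (Fin (n + 2))))
        (f := fun i : Fin (n + 2) => (-1 : ℝ) ^ (i : ℕ) *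
          (f (τ ∘ i.succAbove) / (X.degT (τ ∘ i.succAbove) : ℝ)))
      refine le_trans hcs ?_
      rw [Finset.card_univ, Fintype.card_fin]
      have heq : ∀ i : Fin (n + 2), ((-1 : ℝ) ^ (i : ℕ) *
          (f (τ ∘ i.succAbove) / (X.degT (τ ∘ i.succAbove) : ℝ))) ^ 2 =
          (if X.IsCellT τ then
            (f (τ ∘ i.succAbove) / (X.degT (τ ∘ i.succAbove) : ℝ)) ^ 2 else 0) := by
        intro i
        rw [if_pos hτ, mul_pow, ← pow_mul, mul_comm (i : ℕ) 2, pow_mul]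
        norm_num
      rw [Finset.sum_congr rfl fun i _ => heq i]
      refine mul_le_mul_of_nonneg_right ?_ ?_
      · push_cast
        exact le_refl _
      · refine Finset.sum_nonneg fun i _ => ?_
        rw [if_pos hτ]
        positivity
    · rw [if_neg hτ]
      have hz : ∑ i : Fin (n + 2), (if X.IsCellT τ then
          (f (τ ∘ i.succAbove) / (X.degT (τ ∘ i.succAbove) : ℝ)) ^ 2 else 0) = 0 :=
        Finset.sum_eq_zero fun i _ => by rw [if_neg hτ]
      rw [hz, zero_mul, mul_zero]
  have hcnt : ∀ i : Fin (n + 2), (∑ τ : Fin (n + 2) → V, (if X.IsCellT τ then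
      (f (τ ∘ i.succAbove) / (X.degT (τ ∘ i.succAbove) : ℝ)) ^ 2 else 0)) = T := by
    intro i
    rw [reindex_sum i]
    refine Finset.sum_congr rfl fun σ _ => ?_
    have hv : ∀ v : V, (if X.IsCellT ((Fin.cons v σ) ∘ (Fin.cycleRange i)) then
        (f (((Fin.cons v σ) ∘ (Fin.cycleRange i)) ∘ i.succAbove) /
          (X.degT (((Fin.cons v σ) ∘ (Fin.cycleRange i)) ∘ i.succAbove) : ℝ)) ^ 2 else 0) =
        (if X.IsCellT (Fin.cons v σ) then (f σ / (X.degT σ : ℝ)) ^ 2 else 0) := by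
      intro v
      rw [insE_comp_succAbove]
      by_cases hc : X.IsCellT (Fin.cons v σ)
      · rw [if_pos ((isCellT_insE X i v σ).2 hc), if_pos hc]
      · rw [if_neg (fun h => hc ((isCellT_insE X i v σ).1 h)), if_neg hc]
    rw [Finset.sum_congr rfl fun v _ => hv v, ← Finset.sum_filter, Finset.sum_const,
      nsmul_eq_mul]
    by_cases hσ : X.IsCellT σ
    · rw [card_filter_cons X hσ]
      have hd : (X.degT σ : ℝ) ≠ 0 := ne_of_gt (Nat.cast_pos.2 (hdeg σ hσ))
      field_simp
    · have hfσ : f σ = 0 := hf.1 σ hσ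
      have hemp : (Finset.univ.filter (fun v => X.IsCellT (Fin.cons v σ))).card = 0 := by
        rw [Finset.card_eq_zero]
        exact Finset.filter_eq_empty_iff.2 fun v _ hc => hσ (isCellT_of_isCellT_cons hc)
      rw [hemp, hfσ]
      norm_num
  have hsum : ∑ τ : Fin (n + 2) → V, dualW X f τ * dualW X f τ ≤
      ((n : ℝ) + 2) * (((n : ℝ) + 2) * T) := by
    calc ∑ τ : Fin (n + 2) → V, dualW X f τ * dualW X f τ
        ≤ ∑ τ : Fin (n + 2) → V, ((n : ℝ) + 2) * ∑ i : Fin (n + 2), (if X.IsCellT τ then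
            (f (τ ∘ i.succAbove) / (X.degT (τ ∘ i.succAbove) : ℝ)) ^ 2 else 0) :=
          Finset.sum_le_sum fun τ _ => hptw τ
      _ = ((n : ℝ) + 2) * ∑ τ : Fin (n + 2) → V, ∑ i : Fin (n + 2), (if X.IsCellT τ then
            (f (τ ∘ i.succAbove) / (X.degT (τ ∘ i.succAbove) : ℝ)) ^ 2 else 0) := by
          rw [Finset.mul_sum]
      _ = ((n : ℝ) + 2) * ∑ i : Fin (n + 2), ∑ τ : Fin (n + 2) → V, (if X.IsCellT τ then
            (f (τ ∘ i.succAbove) / (X.degT (τ ∘ i.succAbove) : ℝ)) ^ 2 else 0) := by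
          rw [Finset.sum_comm]
      _ = ((n : ℝ) + 2) * ∑ _i : Fin (n + 2), T := by
          rw [Finset.sum_congr rfl fun i _ => hcnt i]
      _ = ((n : ℝ) + 2) * (((n : ℝ) + 2) * T) := by
          rw [Finset.sum_const, Finset.card_univ, Fintype.card_fin, nsmul_eq_mul]
          push_cast
          ring
  unfold SComplex.innerU
  rw [hWf]
  have hfac2 : (((n + 2).factorial : ℕ) : ℝ) = ((n : ℝ) + 2) * (((n + 1).factorial : ℕ) : ℝ) := by
    have := congrArg (Nat.cast : ℕ → ℝ) (Nat.factorial_succ (n + 1))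
    push_cast at this ⊢
    linarith
  have h1 : (0:ℝ) < (((n + 2).factorial : ℕ) : ℝ) := by positivity
  have h2 : (0:ℝ) < (((n + 1).factorial : ℕ) : ℝ) := by positivity
  have hTnn : 0 ≤ T := by
    refine Finset.sum_nonneg fun σ _ => div_nonneg (mul_self_nonneg _) (Nat.cast_nonneg _)
  calc (1 / (((n + 2).factorial : ℕ) : ℝ)) * ∑ τ : Fin (n + 2) → V, dualW X f τ * dualW X f τ
      ≤ (1 / (((n + 2).factorial : ℕ) : ℝ)) * (((n : ℝ) + 2) * (((n : ℝ) + 2) * T)) := by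
        apply mul_le_mul_of_nonneg_left hsum (by positivity)
    _ = ((n : ℝ) + 2) * ((1 / (((n + 1).factorial : ℕ) : ℝ)) * T) := by
        rw [hfac2]
        field_simp

end StmtAux
namespace StmtAux

open Equiv Fin Finset

variable {V : Type*}

lemma nbrW_add [Fintype V] (X : SComplex V) {n : ℕ} (f g : (Fin (n + 1) → V) → ℝ) :
    X.nbrW (f + g) = X.nbrW f + X.nbrW g := by
  funext σ
  show X.nbrW (f + g) σ = X.nbrW f σ + X.nbrW g σ
  rw [nbrW_eq_sum, nbrW_eq_sum, nbrW_eq_sum, ← Finset.sum_add_distrib]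
  refine Finset.sum_congr rfl fun v _ => ?_
  rw [← Finset.sum_add_distrib]
  refine Finset.sum_congr rfl fun i _ => ?_
  show (-1 : ℝ) ^ (i : ℕ) * (f (Fin.cons v (σ ∘ i.succAbove)) + g (Fin.cons v (σ ∘ i.succAbove))) /
      (X.degT (Fin.cons v (σ ∘ i.succAbove)) : ℝ) = _
  ring

lemma nbrW_smul [Fintype V] (X : SComplex V) {n : ℕ} (c : ℝ) (f : (Fin (n + 1) → V) → ℝ) :
    X.nbrW (c • f) = c • X.nbrW f := by
  funext σ
  show X.nbrW (c • f) σ = c * X.nbrW f σ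
  rw [nbrW_eq_sum, nbrW_eq_sum, Finset.mul_sum]
  refine Finset.sum_congr rfl fun v _ => ?_
  rw [Finset.mul_sum]
  refine Finset.sum_congr rfl fun i _ => ?_
  show (-1 : ℝ) ^ (i : ℕ) * (c * f (Fin.cons v (σ ∘ i.succAbove))) /
      (X.degT (Fin.cons v (σ ∘ i.succAbove)) : ℝ) = _
  ring

lemma transOp_add [Fintype V] (X : SComplex V) {n : ℕ} (p : ℝ)
    (f g : (Fin (n + 1) → V) → ℝ) :
    X.transOp p (f + g) = X.transOp p f + X.transOp p g := by
  funext σ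
  show p * (f σ + g σ) + _ * X.nbrW (f + g) σ = _
  rw [nbrW_add]
  show p * (f σ + g σ) + _ * (X.nbrW f σ + X.nbrW g σ) =
    (p * f σ + _ * X.nbrW f σ) + (p * g σ + _ * X.nbrW g σ)
  ring

lemma transOp_smul [Fintype V] (X : SComplex V) {n : ℕ} (p c : ℝ)
    (f : (Fin (n + 1) → V) → ℝ) :
    X.transOp p (c • f) = c • X.transOp p f := by
  funext σ
  show p * (c * f σ) + _ * X.nbrW (c • f) σ = c * (p * f σ + _ * X.nbrW f σ)
  rw [nbrW_smul]
  show p * (c * f σ) + _ * (c * X.nbrW f σ) = _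
  ring

lemma isForm_transOp [Fintype V] (X : SComplex V) {n : ℕ} (p : ℝ)
    (hdeg : ∀ σ : Fin (n + 1) → V, X.IsCellT σ → 0 < X.degT σ)
    {f : (Fin (n + 1) → V) → ℝ} (hf : X.IsForm (n + 1) f) :
    X.IsForm (n + 1) (X.transOp p f) :=
  IsForm.addf (IsForm.smulf p hf) (IsForm.smulf _ (isForm_nbrW X hdeg hf))

lemma bdry_sub [Fintype V] (X : SComplex V) {n : ℕ} (f g : (Fin (n + 1) → V) → ℝ)
    (σ : Fin n → V) :
    X.bdry (fun τ => f τ - g τ) σ = X.bdry f σ - X.bdry g σ := by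
  rw [bdry_eq_sum, bdry_eq_sum, bdry_eq_sum, ← Finset.sum_sub_distrib]

lemma bdry_addf [Fintype V] (X : SComplex V) {n : ℕ} (f g : (Fin (n + 1) → V) → ℝ)
    (σ : Fin n → V) :
    X.bdry (fun τ => f τ + g τ) σ = X.bdry f σ + X.bdry g σ := by
  rw [bdry_eq_sum, bdry_eq_sum, bdry_eq_sum, ← Finset.sum_add_distrib]

lemma bdry_smulf [Fintype V] (X : SComplex V) {n : ℕ} (c : ℝ) (f : (Fin (n + 1) → V) → ℝ)
    (σ : Fin n → V) :
    X.bdry (fun τ => c * f τ) σ = c * X.bdry f σ := by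
  rw [bdry_eq_sum, bdry_eq_sum, Finset.mul_sum]

lemma dualU_addf [Fintype V] (X : SComplex V) {n : ℕ} (f g : (Fin n → V) → ℝ) :
    dualU X (fun σ => f σ + g σ) = fun τ => dualU X f τ + dualU X g τ := by
  funext τ
  unfold dualU
  by_cases hτ : X.IsCellT τ
  · rw [if_pos hτ, if_pos hτ, if_pos hτ, ← mul_add, ← Finset.sum_add_distrib]
    congr 1
    refine Finset.sum_congr rfl fun i _ => ?_
    show (-1 : ℝ) ^ (i : ℕ) * (f (τ ∘ i.succAbove) + g (τ ∘ i.succAbove)) = _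
    ring
  · rw [if_neg hτ, if_neg hτ, if_neg hτ, add_zero]

lemma dualU_smulf [Fintype V] (X : SComplex V) {n : ℕ} (c : ℝ) (f : (Fin n → V) → ℝ) :
    dualU X (fun σ => c * f σ) = fun τ => c * dualU X f τ := by
  funext τ
  unfold dualU
  by_cases hτ : X.IsCellT τ
  · rw [if_pos hτ, if_pos hτ]
    rw [Finset.mul_sum, Finset.mul_sum, Finset.mul_sum]
    refine Finset.sum_congr rfl fun i _ => ?_
    show (X.degT τ : ℝ) * ((-1 : ℝ) ^ (i : ℕ) * (c * f (τ ∘ i.succAbove))) =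
      c * ((X.degT τ : ℝ) * ((-1 : ℝ) ^ (i : ℕ) * f (τ ∘ i.succAbove)))
    ring
  · rw [if_neg hτ, if_neg hτ, mul_zero]

lemma dualU_zero [Fintype V] (X : SComplex V) {n : ℕ} :
    dualU X (fun _ : Fin n → V => (0 : ℝ)) = fun _ => 0 := by
  funext τ
  unfold dualU
  by_cases hτ : X.IsCellT τ
  · rw [if_pos hτ, Finset.sum_eq_zero fun i _ => by rw [mul_zero], mul_zero]
  · rw [if_neg hτ]

lemma innerU_zero_right [Fintype V] {n : ℕ} (g : (Fin n → V) → ℝ) :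
    SComplex.innerU g (fun _ => (0 : ℝ)) = 0 := by
  unfold SComplex.innerU
  rw [Finset.sum_eq_zero fun σ _ => by rw [mul_zero], mul_zero]

lemma innerW_nbrW_symm [Fintype V] (X : SComplex V) {n : ℕ}
    (hdeg : ∀ σ : Fin (n + 1) → V, X.IsCellT σ → 0 < X.degT σ)
    {f g : (Fin (n + 1) → V) → ℝ} (hf : X.IsForm (n + 1) f) (hg : X.IsForm (n + 1) g) :
    X.innerW (X.nbrW f) g = X.innerW f (X.nbrW g) := by
  have key : ∀ (u w : (Fin (n + 1) → V) → ℝ), X.IsForm (n + 1) u → X.IsForm (n + 1) w →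
      X.innerW (X.nbrW u) w = X.innerW u w -
        SComplex.innerU (dualW X w) (dualW X u) := by
    intro u w hu hw
    have h1 : X.innerW (fun σ => u σ - X.nbrW u σ) w =
        X.innerW u w - X.innerW (X.nbrW u) w := innerW_sub_left X u (X.nbrW u) w
    have h2 : (fun σ => u σ - X.nbrW u σ) = X.bdry (dualW X u) := by
      funext σ
      rw [bdry_dualW X hdeg hu σ]
    have h3 : X.innerW (X.bdry (dualW X u)) w =
        SComplex.innerU (dualW X w) (dualW X u) := by
      rw [innerW_comm, innerW_bdry X (isForm_dualW X hu)]
    rw [h2, h3] at h1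
    linarith
  rw [key f g hf hg]
  have h4 : X.innerW f (X.nbrW g) = X.innerW (X.nbrW g) f := innerW_comm X f (X.nbrW g)
  rw [h4, key g f hg hf, innerW_comm X g f, innerU_comm]

end StmtAux
namespace StmtAux

open Equiv Fin Finset

variable {V : Type*}

lemma dualW_eq_zero_of_closed [Fintype V] (X : SComplex V) {n : ℕ}
    {f : (Fin (n + 1) → V) → ℝ} (hf : X.IsForm (n + 1) f)
    (hcl : ∀ g : (Fin (n + 2) → V) → ℝ, X.IsForm (n + 2) g → X.innerW f (X.bdry g) = 0) :
    dualW X f = fun _ => 0 := by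
  apply innerU_self_eq_zero
  rw [← innerW_bdry X (isForm_dualW X hf)]
  exact hcl _ (isForm_dualW X hf)

lemma nbrW_eq_of_dualW_zero [Fintype V] (X : SComplex V) {n : ℕ}
    (hdeg : ∀ σ : Fin (n + 1) → V, X.IsCellT σ → 0 < X.degT σ)
    {f : (Fin (n + 1) → V) → ℝ} (hf : X.IsForm (n + 1) f)
    (hz : dualW X f = fun _ => 0) : X.nbrW f = f := by
  funext σ
  have h1 := bdry_dualW X hdeg hf σ
  rw [hz, bdry_zero] at h1
  linarith

lemma closed_of_nbrW_eq [Fintype V] (X : SComplex V) {n : ℕ}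
    (hdeg : ∀ σ : Fin (n + 1) → V, X.IsCellT σ → 0 < X.degT σ)
    {f : (Fin (n + 1) → V) → ℝ} (hf : X.IsForm (n + 1) f) (hfix : X.nbrW f = f) :
    ∀ g : (Fin (n + 2) → V) → ℝ, X.IsForm (n + 2) g → X.innerW f (X.bdry g) = 0 := by
  have hz : dualW X f = fun _ => 0 := by
    apply innerU_self_eq_zero
    rw [← innerW_bdry X (isForm_dualW X hf)]
    have hb : X.bdry (dualW X f) = fun _ => (0 : ℝ) := by
      funext σ
      rw [bdry_dualW X hdeg hf σ, hfix]
      ring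
    rw [hb, innerW_zero_right]
  intro g hg
  rw [innerW_bdry X hg, hz, innerU_zero_left]

end StmtAux
namespace StmtAux

variable {V : Type*}

lemma transOp_iterate_smul [Fintype V] (X : SComplex V) {n : ℕ} (p c : ℝ) (k : ℕ)
    (f : (Fin (n + 1) → V) → ℝ) :
    (X.transOp p)^[k] (c • f) = c • (X.transOp p)^[k] f := by
  induction k generalizing f with
  | zero => simp
  | succ k ih =>
    rw [Function.iterate_succ_apply, transOp_smul, ih, Function.iterate_succ_apply]

end StmtAux
namespace StmtAux

open scoped RealInnerProductSpace

lemma spectral_limit {E W : Type*} [NormedAddCommGroup E] [InnerProductSpace ℝ E]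
    [FiniteDimensional ℝ E] [AddCommGroup W] [Module ℝ W] [TopologicalSpace W]
    [IsTopologicalAddGroup W] [ContinuousSMul ℝ W]
    (B : E →ₗ[ℝ] E) (hsym : B.IsSymmetric) (c₀ : ℝ) (hc₀ : -1 < c₀)
    (hbnd : ∀ x : E, c₀ * ⟪x, x⟫ ≤ ⟪B x, x⟫ ∧ ⟪B x, x⟫ ≤ ⟪x, x⟫)
    (T : E →ₗ[ℝ] W) (x₀ : E) :
    ∃ L : E, Tendsto (fun k => T ((B ^ k) x₀)) atTop (𝓝 (T L)) ∧ B L = L ∧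
      ∀ z : E, B z = z → ⟪x₀ - L, z⟫ = 0 := by
  classical
  set N := Module.finrank ℝ E with hN
  set b := hsym.eigenvectorBasis rfl with hbdef
  set μ := hsym.eigenvalues rfl with hμdef
  have hb : ∀ i, B (b i) = μ i • b i := fun i =>
    hsym.apply_eigenvectorBasis rfl i
  have hbu : ∀ i, ⟪b i, b i⟫ = 1 := fun i => by
    have h1 : ‖b i‖ = 1 := b.orthonormal.1 i
    rw [real_inner_self_eq_norm_mul_norm, h1, one_mul]
  have hμb : ∀ i, c₀ ≤ μ i ∧ μ i ≤ 1 := by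
    intro i
    have h1 : ⟪B (b i), b i⟫ = μ i := by
      rw [hb i, real_inner_smul_left, hbu i, mul_one]
    have h2 := hbnd (b i)
    rw [h1, hbu i, mul_one] at h2
    exact h2
  have hpow : ∀ (k : ℕ) (i : Fin N), (B ^ k) (b i) = (μ i) ^ k • b i := by
    intro k i
    induction k with
    | zero => simp
    | succ k ih =>
      rw [pow_succ, Module.End.mul_apply, hb i, map_smul, ih, smul_smul, pow_succ' (μ i) k]
  have hexp : ∀ k, (B ^ k) x₀ = ∑ i, (b.repr x₀ i * (μ i) ^ k) • b i := by
    intro k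
    conv_lhs => rw [← b.sum_repr x₀, map_sum]
    refine Finset.sum_congr rfl fun i _ => ?_
    rw [map_smul, hpow k i, smul_smul]
  set L : E := ∑ i, (b.repr x₀ i * (if μ i = 1 then (1 : ℝ) else 0)) • b i with hL
  have hBL : B L = L := by
    rw [hL, map_sum]
    refine Finset.sum_congr rfl fun i _ => ?_
    rw [map_smul, hb i, smul_smul]
    by_cases hμ1 : μ i = 1
    · rw [hμ1, mul_one]
    · rw [if_neg hμ1]
      simp
  have hconv : Tendsto (fun k => (B ^ k) x₀) atTop (𝓝 L) := by
    rw [show (fun k => (B ^ k) x₀) = fun k => ∑ i, (b.repr x₀ i * (μ i) ^ k) • b i from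
      funext hexp, hL]
    refine tendsto_finset_sum _ fun i _ => ?_
    refine Filter.Tendsto.smul_const ?_ (b i)
    refine Filter.Tendsto.const_mul _ ?_
    by_cases hμ1 : μ i = 1
    · rw [if_pos hμ1, hμ1]
      exact (tendsto_const_nhds : Tendsto (fun _ : ℕ => (1:ℝ)) atTop (𝓝 1)).congr
        fun k => (one_pow k).symm
    · rw [if_neg hμ1]
      have habs : |μ i| < 1 := by
        rw [abs_lt]
        exact ⟨lt_of_lt_of_le hc₀ (hμb i).1, lt_of_le_of_ne (hμb i).2 hμ1⟩
      exact tendsto_pow_atTop_nhds_zero_of_abs_lt_one habs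
  have horth : ∀ z : E, B z = z → ⟪x₀ - L, z⟫ = 0 := by
    intro z hz
    have hbz : ∀ i, μ i ≠ 1 → ⟪b i, z⟫ = 0 := by
      intro i hne
      have h1 : ⟪B (b i), z⟫ = ⟪b i, B z⟫ := hsym (b i) z
      rw [hb i, hz, real_inner_smul_left] at h1
      have h2 : (μ i - 1) * ⟪b i, z⟫ = 0 := by linear_combination h1
      rcases mul_eq_zero.1 h2 with h | h
      · exact absurd (by linarith : μ i = 1) hne
      · exact h
    rw [inner_sub_left]
    have hx : ⟪x₀, z⟫ = ∑ i, b.repr x₀ i * ⟪b i, z⟫ := by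
      conv_lhs => rw [← b.sum_repr x₀]
      rw [sum_inner]
      exact Finset.sum_congr rfl fun i _ => real_inner_smul_left _ _ _
    have hLz : ⟪L, z⟫ = ∑ i, (b.repr x₀ i * (if μ i = 1 then (1 : ℝ) else 0)) * ⟪b i, z⟫ := by
      rw [hL, sum_inner]
      exact Finset.sum_congr rfl fun i _ => real_inner_smul_left _ _ _
    rw [hx, hLz, ← Finset.sum_sub_distrib]
    refine Finset.sum_eq_zero fun i _ => ?_
    by_cases hμ1 : μ i = 1
    · rw [if_pos hμ1]
      ring
    · rw [if_neg hμ1, hbz i hμ1]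
      ring
  refine ⟨L, ?_, hBL, horth⟩
  have hTc : Continuous T := T.continuous_of_finiteDimensional
  exact (hTc.tendsto L).comp hconv

lemma proj_decomp {E : Type*} [NormedAddCommGroup E] [InnerProductSpace ℝ E]
    [FiniteDimensional ℝ E] (K : Submodule ℝ E) (v : E) :
    ∃ y ∈ K, ∃ z : E, (∀ u ∈ K, ⟪u, z⟫ = 0) ∧ v = y + z := by
  obtain ⟨y, hy, z, hz, hvyz⟩ := K.exists_add_mem_mem_orthogonal v
  exact ⟨y, hy, z, fun u hu => (Submodule.mem_orthogonal K z).1 hz u hu, hvyz⟩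

end StmtAux
set_option maxHeartbeats 2000000 in
open StmtAux in
/-- For a finite uniform `d`-dimensional complex (`d = m+2 ≥ 2`) and
`(d-1)/(3d-1) < p < 1`, the normalized expectation process of the `p`-lazy
`(d-1)`-walk started at any oriented `(d-1)`-cell `σ₀` converges, its limit is the
orthogonal projection of `𝟙_{σ₀}` onto the closed forms `Z^{d-1}`, and the limit is
exact for every starting cell iff the real `(d-1)`-homology of `X` vanishes. -/
theorem stmt0 {V : Type*} [Fintype V] (m : ℕ) (X : SComplex V)
    (hdim : ∀ s ∈ X.cells, s.card ≤ m + 3)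
    (huni : ∀ s ∈ X.cells, ∃ t ∈ X.cells, t.card = m + 3 ∧ s ⊆ t)
    (htop : ∃ s ∈ X.cells, s.card = m + 3)
    (p : ℝ) (hp₁ : ((m + 2 : ℝ) - 1) / (3 * (m + 2 : ℝ) - 1) < p) (hp₂ : p < 1) :
    (∀ σ₀ : Fin (m + 2) → V, X.IsCellT σ₀ →
        ∃ L : (Fin (m + 2) → V) → ℝ,
          Tendsto (fun nn => X.nexp p σ₀ nn) atTop (𝓝 L) ∧
          X.IsClosedForm m L ∧
          ∀ z, X.IsClosedForm m z → X.innerW (dirac σ₀ - L) z = 0) ∧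
      ((∀ σ₀ : Fin (m + 2) → V, X.IsCellT σ₀ →
          ∀ L, Tendsto (fun nn => X.nexp p σ₀ nn) atTop (𝓝 L) → X.IsExactForm m L) ↔
        ∀ f : (Fin (m + 2) → V) → ℝ, X.IsForm (m + 2) f → X.bdry f = 0 →
          ∃ g : (Fin (m + 3) → V) → ℝ, X.IsForm (m + 3) g ∧ X.bdry g = f) := by
  classical
  -- numerics
  set M : ℝ := ((m + 1 : ℕ) : ℝ) with hM
  have hMm : M = (m : ℝ) + 1 := by rw [hM]; push_cast; ring
  have hM0 : 0 < M + 1 := by rw [hMm]; positivity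
  have hmnn : (0:ℝ) ≤ (m : ℝ) := Nat.cast_nonneg m
  have hp0 : 0 < p := by
    refine lt_trans ?_ hp₁
    have h1 : (0:ℝ) < (m + 2 : ℝ) - 1 := by linarith
    have h2 : (0:ℝ) < 3 * (m + 2 : ℝ) - 1 := by linarith
    positivity
  have hden : 0 < p * M + 1 := by
    have h3 : 0 < p * M := by rw [hMm]; positivity
    linarith
  set c : ℝ := (M + 1) / (p * M + 1) with hc
  set e : ℝ := (1 - p) / (M + 1) with he
  have hc0 : 0 < c := by rw [hc]; positivity
  have he0 : 0 < e := by
    rw [he]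
    apply div_pos (by linarith) hM0
  have hce : 0 ≤ c * e := mul_nonneg (le_of_lt hc0) (le_of_lt he0)
  have he1 : e * (M + 1) = 1 - p := by
    rw [he]
    field_simp
  have hce1 : c * p + c * e = 1 := by
    rw [hc, he, ← mul_add, div_mul_eq_mul_div, div_eq_one_iff_eq hden.ne', mul_add,
      mul_div_assoc', mul_div_cancel_left₀ _ hM0.ne']
    ring
  have hkey : (m:ℝ) + 1 < p * (3 * (m:ℝ) + 5) := by
    have h3 : (0:ℝ) < 3 * ((m:ℝ) + 2) - 1 := by linarith
    rw [div_lt_iff₀ h3] at hp₁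
    nlinarith [hp₁]
  have hlow : -1 < c * (2 * p - 1) := by
    rw [hc, hMm, div_mul_eq_mul_div]
    have hden' : (0:ℝ) < p * ((m:ℝ) + 1) + 1 := by rw [← hMm]; exact hden
    rw [lt_div_iff₀ hden']
    nlinarith [hkey]
  -- degrees are positive
  have hdeg : ∀ σ : Fin (m + 2) → V, X.IsCellT σ → 0 < X.degT σ := by
    intro σ hσ
    refine degT_pos X ?_
    obtain ⟨t, ht, htc, hts⟩ := huni _ hσ.2
    refine ⟨t, ht, ?_, hts⟩
    rw [card_image_tuple hσ.1, htc]
  -- the space of forms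
  let F : Submodule ℝ ((Fin (m + 2) → V) → ℝ) :=
    { carrier := {f | X.IsForm (m + 2) f}
      add_mem' := fun hf hg => IsForm.addf hf hg
      zero_mem' := isForm_zero X (m + 2)
      smul_mem' := fun c' f hf => IsForm.smulf c' hf }
  let core : InnerProductSpace.Core ℝ F :=
    { inner := fun x y => X.innerW x.1 y.1
      conj_inner_symm := fun x y => by
        show (starRingEnd ℝ) (X.innerW y.1 x.1) = X.innerW x.1 y.1
        rw [starRingEnd_apply, star_trivial]
        exact innerW_comm X y.1 x.1
      re_inner_nonneg := fun x => by
        show (0:ℝ) ≤ _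
        simpa using innerW_nonneg X x.1
      add_left := fun x y z => innerW_add_left X x.1 y.1 z.1
      smul_left := fun x y r => by
        show X.innerW (r • x.1) y.1 = (starRingEnd ℝ) r * X.innerW x.1 y.1
        rw [starRingEnd_apply, star_trivial]
        exact innerW_smul_left X r x.1 y.1
      definite := fun x hx => Subtype.ext (innerW_definite X hdeg x.2 hx) }
  letI instN : NormedAddCommGroup F := core.toNormedAddCommGroup
  letI instIP : @InnerProductSpace ℝ F _ instN.toSeminormedAddCommGroup :=
    InnerProductSpace.ofCore core.toCore
  haveI hFD : FiniteDimensional ℝ F := inferInstance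
  -- the normalized transition operator
  have hmemT : ∀ x : F, X.transOp p x.1 ∈ F := fun x => isForm_transOp X p hdeg x.2
  let BF : F →ₗ[ℝ] F :=
    { toFun := fun x => ⟨c • X.transOp p x.1, F.smul_mem c (hmemT x)⟩
      map_add' := fun x y => by
        apply Subtype.ext
        show c • X.transOp p ((x + y : F) : (Fin (m+2) → V) → ℝ) = _
        rw [show ((x + y : F) : (Fin (m+2) → V) → ℝ) = x.1 + y.1 from rfl, transOp_add,
          smul_add]
        rfl
      map_smul' := fun r x => by
        apply Subtype.ext
        show c • X.transOp p ((r • x : F) : (Fin (m+2) → V) → ℝ) = _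
        rw [show ((r • x : F) : (Fin (m+2) → V) → ℝ) = r • x.1 from rfl, transOp_smul,
          smul_comm]
        rfl }
  have hBFval : ∀ (k : ℕ) (x : F), ((BF ^ k) x).1 = c ^ k • (X.transOp p)^[k] x.1 := by
    intro k
    induction k with
    | zero => intro x; simp
    | succ k ih =>
      intro x
      rw [pow_succ, Module.End.mul_apply, ih (BF x)]
      show c ^ k • (X.transOp p)^[k] (c • X.transOp p x.1) = _
      rw [transOp_iterate_smul, smul_smul, ← pow_succ, ← Function.iterate_succ_apply]
  -- expansion of the quadratic form
  have expand : ∀ u w : F, X.innerW (c • X.transOp p u.1) w.1 =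
      c * (p * X.innerW u.1 w.1 + e * X.innerW (X.nbrW u.1) w.1) := by
    intro u w
    have e1 : X.innerW (c • X.transOp p u.1) w.1 = c * X.innerW (X.transOp p u.1) w.1 :=
      innerW_smul_left X c (X.transOp p u.1) w.1
    rw [e1]
    congr 1
    calc X.innerW (X.transOp p u.1) w.1
        = X.innerW (fun σ => (fun σ => p * u.1 σ) σ + (fun σ => e * X.nbrW u.1 σ) σ) w.1 :=
          rfl
      _ = X.innerW (fun σ => p * u.1 σ) w.1 + X.innerW (fun σ => e * X.nbrW u.1 σ) w.1 :=
          innerW_add_left X _ _ _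
      _ = p * X.innerW u.1 w.1 + e * X.innerW (X.nbrW u.1) w.1 := by
          rw [innerW_smul_left X p u.1 w.1, innerW_smul_left X e (X.nbrW u.1) w.1]
  have hsymm : @LinearMap.IsSymmetric ℝ F _ instN.toSeminormedAddCommGroup instIP BF := by
    intro x y
    show X.innerW (c • X.transOp p x.1) y.1 = X.innerW x.1 (c • X.transOp p y.1)
    rw [innerW_comm X x.1 (c • X.transOp p y.1), expand x y, expand y x,
      innerW_comm X y.1 x.1, innerW_nbrW_symm X hdeg y.2 x.2,
      innerW_comm X y.1 (X.nbrW x.1)]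
  have hbnd : ∀ x : F, c * (2 * p - 1) * X.innerW x.1 x.1 ≤
      X.innerW (c • X.transOp p x.1) x.1 ∧
      X.innerW (c • X.transOp p x.1) x.1 ≤ X.innerW x.1 x.1 := by
    intro x
    have hE := expand x x
    set Q := X.innerW x.1 x.1 with hQ
    set R := X.innerW (X.nbrW x.1) x.1 with hR
    have hQ0 : 0 ≤ Q := innerW_nonneg X x.1
    have hU1 : Q - R = SComplex.innerU (dualW X x.1) (dualW X x.1) :=
      innerW_nbrW_self X hdeg x.2
    have hU0 : 0 ≤ SComplex.innerU (dualW X x.1) (dualW X x.1) := innerU_nonneg _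
    have hU2 : SComplex.innerU (dualW X x.1) (dualW X x.1) ≤ (M + 2) * Q :=
      innerU_dualW_le X hdeg x.2
    have hRQ : R ≤ Q := by linarith
    have hRL : -((M + 1) * Q) ≤ R := by linarith
    constructor
    · rw [hE]
      have h5 : c * e * (-((M + 1) * Q)) ≤ c * e * R := mul_le_mul_of_nonneg_left hRL hce
      have he2 : c * e * (M + 1) = c * (1 - p) := by rw [mul_assoc, he1]
      nlinarith [h5, he2]
    · rw [hE]
      have h6 : c * e * R ≤ c * e * Q := mul_le_mul_of_nonneg_left hRQ hce
      have h7 : (c * p + c * e) * Q = Q := by rw [hce1, one_mul]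
      nlinarith [h6, h7]
  -- abstract convergence
  have key1 : ∀ x₀ : F, ∃ L : F,
      Tendsto (fun k => ((BF ^ k) x₀).1) atTop (𝓝 L.1) ∧ BF L = L ∧
      ∀ z : F, BF z = z → X.innerW (x₀.1 - L.1) z.1 = 0 := by
    intro x₀
    obtain ⟨L, h1, h2, h3⟩ := @spectral_limit F ((Fin (m + 2) → V) → ℝ) instN instIP hFD
      _ _ _ _ _ BF hsymm (c * (2 * p - 1)) hlow hbnd F.subtype x₀
    exact ⟨L, h1, h2, h3⟩
  -- Part 1
  have part1 : ∀ σ₀ : Fin (m + 2) → V, X.IsCellT σ₀ →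
      ∃ L : (Fin (m + 2) → V) → ℝ,
        Tendsto (fun nn => X.nexp p σ₀ nn) atTop (𝓝 L) ∧
        X.IsClosedForm m L ∧
        ∀ z, X.IsClosedForm m z → X.innerW (SComplex.dirac σ₀ - L) z = 0 := by
    intro σ₀ hσ₀
    obtain ⟨Lf, hconv, hfixL, horth⟩ := key1 ⟨SComplex.dirac σ₀, isForm_dirac X hσ₀⟩
    have hnbrL : X.nbrW Lf.1 = Lf.1 := by
      have hval : c • X.transOp p Lf.1 = Lf.1 := congrArg Subtype.val hfixL
      funext σ
      have h8 : c * (p * Lf.1 σ + e * X.nbrW Lf.1 σ) = Lf.1 σ := congrFun hval σ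
      have h9 : c * e * (X.nbrW Lf.1 σ - Lf.1 σ) = 0 := by linear_combination h8 - Lf.1 σ * hce1
      have hcene : c * e ≠ 0 := ne_of_gt (mul_pos hc0 he0)
      have := mul_eq_zero.1 h9
      rcases this with h | h
      · exact absurd h hcene
      · linarith
    refine ⟨Lf.1, ?_, ?_, ?_⟩
    · have hseq : (fun nn => X.nexp p σ₀ nn) =
          fun k => ((BF ^ k) (⟨SComplex.dirac σ₀, isForm_dirac X hσ₀⟩ : F)).1 := by
        funext k
        rw [hBFval k]
        rfl
      rw [hseq]
      exact hconv
    · exact ⟨Lf.2, closed_of_nbrW_eq X hdeg Lf.2 hnbrL⟩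
    · intro z hz
      have hfixz : BF ⟨z, hz.1⟩ = ⟨z, hz.1⟩ := by
        apply Subtype.ext
        have hdz : dualW X z = fun _ => 0 := dualW_eq_zero_of_closed X hz.1 hz.2
        have hnz : X.nbrW z = z := nbrW_eq_of_dualW_zero X hdeg hz.1 hdz
        show c • X.transOp p z = z
        funext σ
        show c * (p * z σ + e * X.nbrW z σ) = z σ
        rw [hnz]
        linear_combination (z σ) * hce1
      exact horth ⟨z, hz.1⟩ hfixz
  refine ⟨part1, ?_, ?_⟩
  · -- forward direction
    intro hex f hf hbf
    let Bd : Submodule ℝ F :=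
      { carrier := {x : F | ∃ G : (Fin (m + 3) → V) → ℝ, X.IsForm (m + 3) G ∧ x.1 = X.bdry G}
        add_mem' := by
          rintro x y ⟨G, hG, hx⟩ ⟨H, hH, hy⟩
          refine ⟨fun τ => G τ + H τ, IsForm.addf hG hH, ?_⟩
          show x.1 + y.1 = _
          funext σ
          show x.1 σ + y.1 σ = X.bdry (fun τ => G τ + H τ) σ
          rw [hx, hy]
          exact (bdry_addf X G H σ).symm
        zero_mem' := ⟨fun _ => 0, isForm_zero X (m + 3), by
          funext σ
          exact (bdry_zero X σ).symm⟩
        smul_mem' := by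
          rintro c' x ⟨G, hG, hx⟩
          refine ⟨fun τ => c' * G τ, IsForm.smulf c' hG, ?_⟩
          show c' • x.1 = _
          funext σ
          show c' * x.1 σ = X.bdry (fun τ => c' * G τ) σ
          rw [hx]
          exact (bdry_smulf X c' G σ).symm }
    obtain ⟨y, hy, z, hzorth, hyz⟩ := @proj_decomp F instN instIP hFD Bd ⟨f, hf⟩
    obtain ⟨G, hG, hyG⟩ := hy
    have hzform : X.IsForm (m + 2) z.1 := z.2
    have hzcl : ∀ g : (Fin (m + 3) → V) → ℝ, X.IsForm (m + 3) g →
        X.innerW z.1 (X.bdry g) = 0 := by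
      intro g hg
      have hmem : (⟨X.bdry g, isForm_bdry X hg⟩ : F) ∈ Bd := ⟨g, hg, rfl⟩
      have h2 := hzorth _ hmem
      rw [innerW_comm]
      exact h2
    have hfy : f = y.1 + z.1 := congrArg Subtype.val hyz
    have hbz : X.bdry z.1 = fun _ => (0:ℝ) := by
      have hzval : z.1 = fun τ => f τ - y.1 τ := by
        funext τ
        have := congrFun hfy τ
        show z.1 τ = f τ - y.1 τ
        have h10 : f τ = y.1 τ + z.1 τ := this
        linarith
      funext ρ
      rw [hzval, bdry_sub X f y.1 ρ]
      have h11 : X.bdry f ρ = 0 := by rw [hbf]; rfl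
      have h12 : X.bdry y.1 ρ = 0 := by
        rw [hyG]
        exact bdry_bdry X hG ρ
      rw [h11, h12]
      ring
    have hz0 : z.1 = fun _ => 0 := by
      have hdir : ∀ σ₀ : Fin (m + 2) → V, X.IsCellT σ₀ →
          X.innerW z.1 (SComplex.dirac σ₀) = 0 := by
        intro σ₀ hσ₀
        obtain ⟨L, hLconv, hLclosed, hLorth⟩ := part1 σ₀ hσ₀
        obtain ⟨hLform, g1, hg1, hprop⟩ := hex σ₀ hσ₀ L hLconv
        have e1 : X.innerW z.1 L = 0 := by
          rw [innerW_comm X z.1 L, hprop z.1 hzform, hbz, innerU_zero_right]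
        have e2 : X.innerW (fun σ => SComplex.dirac σ₀ σ - L σ) z.1 = 0 :=
          hLorth z.1 ⟨hzform, hzcl⟩
        have e3 : X.innerW (SComplex.dirac σ₀) z.1 =
            X.innerW (fun σ => (fun σ => SComplex.dirac σ₀ σ - L σ) σ + (fun σ => L σ) σ) z.1 := by
          congr 1
          funext σ
          show SComplex.dirac σ₀ σ = SComplex.dirac σ₀ σ - L σ + L σ
          ring
        rw [innerW_comm X z.1 (SComplex.dirac σ₀), e3, innerW_add_left X _ _ z.1]
        rw [show X.innerW (fun σ => SComplex.dirac σ₀ σ - L σ) z.1 = 0 from e2]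
        rw [show X.innerW (fun σ => L σ) z.1 = 0 from by
          rw [show (fun σ => L σ) = L from rfl, innerW_comm X L z.1]; exact e1]
        ring
      funext σ
      by_cases hσ : X.IsCellT σ
      · have h1 := hdir σ hσ
        rw [innerW_dirac X hzform hσ] at h1
        have hdne : (X.degT σ : ℝ) ≠ 0 := ne_of_gt (Nat.cast_pos.2 (hdeg σ hσ))
        show z.1 σ = 0
        field_simp at h1
        exact h1.trans (mul_zero _)
      · exact hzform.1 σ hσ
    refine ⟨G, hG, ?_⟩
    rw [← hyG]
    rw [hz0] at hfy
    funext σ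
    have := congrFun hfy σ
    show y.1 σ = f σ
    have h13 : f σ = y.1 σ + 0 := this
    linarith
  · -- backward direction
    intro hH σ₀ hσ₀ L hLT
    obtain ⟨L₀, hconv₀, hclosed₀, horth₀⟩ := part1 σ₀ hσ₀
    have hLL : L = L₀ := tendsto_nhds_unique hLT hconv₀
    rw [hLL]
    let Bδ : Submodule ℝ F :=
      { carrier := {x : F | ∃ g : (Fin (m + 1) → V) → ℝ, X.IsForm (m + 1) g ∧ x.1 = dualU X g}
        add_mem' := by
          rintro x y ⟨g, hg, hx⟩ ⟨g', hg', hy⟩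
          refine ⟨fun ρ => g ρ + g' ρ, IsForm.addf hg hg', ?_⟩
          show x.1 + y.1 = _
          rw [hx, hy, dualU_addf]
          rfl
        zero_mem' := ⟨fun _ => 0, isForm_zero X (m + 1), by
          rw [dualU_zero]
          rfl⟩
        smul_mem' := by
          rintro c' x ⟨g, hg, hx⟩
          refine ⟨fun ρ => c' * g ρ, IsForm.smulf c' hg, ?_⟩
          show c' • x.1 = _
          rw [hx, dualU_smulf]
          rfl }
    obtain ⟨y, hy, z, hzorth, hyz⟩ := @proj_decomp F instN instIP hFD Bδ ⟨L₀, hclosed₀.1⟩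
    obtain ⟨g0, hg0, hyg⟩ := hy
    have hzform : X.IsForm (m + 2) z.1 := z.2
    have hbz : X.bdry z.1 = fun _ => (0:ℝ) := by
      have key : ∀ g : (Fin (m + 1) → V) → ℝ, X.IsForm (m + 1) g →
          SComplex.innerU g (X.bdry z.1) = 0 := by
        intro g hg
        have hmem : (⟨dualU X g, isForm_dualU X hg⟩ : F) ∈ Bδ := ⟨g, hg, rfl⟩
        have h2 := hzorth _ hmem
        rw [← innerW_dualU X hdeg hzform]
        exact h2
      exact innerU_self_eq_zero (key (X.bdry z.1) (isForm_bdry X hzform))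
    have hL0y : L₀ = y.1 + z.1 := congrArg Subtype.val hyz
    have hzz : X.innerW z.1 z.1 = 0 := by
      obtain ⟨G, hG, hGz⟩ := hH z.1 hzform hbz
      have hzval : z.1 = fun σ => L₀ σ - y.1 σ := by
        funext σ
        have h4 := congrFun hL0y σ
        show z.1 σ = L₀ σ - y.1 σ
        have h5 : L₀ σ = y.1 σ + z.1 σ := h4
        linarith
      calc X.innerW z.1 z.1 = X.innerW z.1 (X.bdry G) := by rw [hGz]
        _ = X.innerW (fun σ => L₀ σ - y.1 σ) (X.bdry G) := by rw [← hzval]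
        _ = X.innerW L₀ (X.bdry G) - X.innerW y.1 (X.bdry G) :=
            innerW_sub_left X L₀ y.1 (X.bdry G)
        _ = 0 := by
            rw [hclosed₀.2 G hG, hyg, innerW_dualU X hdeg (isForm_bdry X hG),
              show X.bdry (X.bdry G) = fun _ => (0:ℝ) from funext (bdry_bdry X hG),
              innerU_zero_right]
            ring
    have hz0 : z.1 = fun _ => 0 := innerW_definite X hdeg hzform hzz
    have hL0 : L₀ = dualU X g0 := by
      rw [hL0y, hz0, hyg]
      funext σ
      show dualU X g0 σ + 0 = dualU X g0 σ
      ring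
    refine ⟨hclosed₀.1, g0, hg0, fun h hh => ?_⟩
    rw [hL0]
    exact innerW_dualU X hdeg hh

end
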